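/- arXiv:1706.02854 — 6 statements merged into one kernel-verified Lean document; each statement's English description precedes it below -/
import Mathlib

section
/- Soundness of the axiom system K(A_m): for every ℒ_Am□-formula φ, if φ is derivable in K(A_m) then φ is K(A)-valid. -/
/-- Formulas of the modal-multiplicative language ℒ_Am□ : variables, → (`imp`)
and □ (`box`). -/
inductive FormM : Type
  | var : ℕ → FormM
  | imp : FormM → FormM → FormM
  | box : FormM → FormM
  deriving DecidableEq

/-- The defined constant `0̄ := p₀ → p₀` (with `p₀` the variable of index 0). -/
def zeroM : FormM := .imp (.var 0) (.var 0)

/-- The defined negation `¬φ := φ → 0̄`. -/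
def negM (φ : FormM) : FormM := .imp φ zeroM

/-- The defined connective `φ & ψ := ¬φ → ψ`. -/
def conjM (φ ψ : FormM) : FormM := .imp (negM φ) ψ

/-- The iterated conjunctions: `0φ := 0̄` and `(n+1)φ := φ & (nφ)`. -/
def iterM : ℕ → FormM → FormM
  | 0, _ => zeroM
  | n + 1, φ => conjM φ (iterM n φ)

/-- A K(A)-model: a nonempty set of worlds, an accessibility relation, and a
valuation of the variables bounded by some `r ≥ 0`. -/
structure KAModel where
  World : Type
  ne : Nonempty World
  R : World → World → Prop
  V : ℕ → World → ℝ
  r : ℝ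
  hr : 0 ≤ r
  hV : ∀ p x, V p x ∈ Set.Icc (-r) r

/-- The valuation extended to all ℒ_Am□-formulas.  Note that `sInf ∅ = 0` in `ℝ`,
matching the convention that the infimum of the empty set is `0`. -/
noncomputable def KAModel.val (M : KAModel) : FormM → M.World → ℝ
  | .var p, x => M.V p x
  | .imp φ ψ, x => M.val ψ x - M.val φ x
  | .box φ, x => sInf {v : ℝ | ∃ y, M.R x y ∧ M.val φ y = v}

/-- K(A)-validity of an ℒ_Am□-formula. -/
def KAValid (φ : FormM) : Prop := ∀ (M : KAModel) (x : M.World), 0 ≤ M.val φ x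

/-- The axiom system K(A_m). -/
inductive KAm : FormM → Prop
  | axB (φ ψ χ : FormM) : KAm (.imp (.imp φ ψ) (.imp (.imp ψ χ) (.imp φ χ)))
  | axC (φ ψ χ : FormM) : KAm (.imp (.imp φ (.imp ψ χ)) (.imp ψ (.imp φ χ)))
  | axI (φ : FormM) : KAm (.imp φ φ)
  | axA (φ ψ : FormM) : KAm (.imp (.imp (.imp φ ψ) ψ) φ)
  | axK (φ ψ : FormM) : KAm (.imp (.box (.imp φ ψ)) (.imp (.box φ) (.box ψ)))
  | axD (n : ℕ) (φ : FormM) : 2 ≤ n → KAm (.imp (.box (iterM n φ)) (iterM n (.box φ)))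
  | mp {φ ψ : FormM} : KAm φ → KAm (.imp φ ψ) → KAm ψ
  | nec {φ : FormM} : KAm φ → KAm (.box φ)
  | con (n : ℕ) {φ : FormM} : 2 ≤ n → KAm (iterM n φ) → KAm φ

open Pointwise
section Aux

noncomputable def bnd (M : KAModel) : FormM → ℝ
  | .var _ => M.r
  | .imp φ ψ => bnd M φ + bnd M ψ
  | .box φ => bnd M φ

lemma bnd_nonneg (M : KAModel) (φ : FormM) : 0 ≤ bnd M φ := by
  induction φ with
  | var p => exact M.hr
  | imp φ ψ ihφ ihψ => exact add_nonneg ihφ ihψ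
  | box φ ih => exact ih

lemma abs_val_le (M : KAModel) (φ : FormM) : ∀ x, |M.val φ x| ≤ bnd M φ := by
  induction φ with
  | var p => intro x; exact abs_le.2 ⟨(M.hV p x).1, (M.hV p x).2⟩
  | imp φ ψ ihφ ihψ =>
    intro x
    calc |M.val ψ x - M.val φ x| ≤ |M.val ψ x| + |M.val φ x| := abs_sub _ _
      _ ≤ bnd M ψ + bnd M φ := add_le_add (ihψ x) (ihφ x)
      _ = bnd M φ + bnd M ψ := add_comm _ _
  | box φ ih =>
    intro x
    show |sInf {v : ℝ | ∃ y, M.R x y ∧ M.val φ y = v}| ≤ bnd M φ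
    set S := {v : ℝ | ∃ y, M.R x y ∧ M.val φ y = v} with hS
    rcases S.eq_empty_or_nonempty with h | h
    · rw [h, Real.sInf_empty, abs_zero]; exact bnd_nonneg M φ
    · have hlb : ∀ v ∈ S, -(bnd M φ) ≤ v := by
        rintro v ⟨y, _, rfl⟩; exact (abs_le.1 (ih y)).1
      have hbdd : BddBelow S := ⟨-(bnd M φ), hlb⟩
      obtain ⟨v, hv⟩ := h
      refine abs_le.2 ⟨le_csInf ⟨v, hv⟩ hlb, le_trans (csInf_le hbdd hv) ?_⟩
      obtain ⟨y, _, rfl⟩ := hv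
      exact (abs_le.1 (ih y)).2

lemma bddBelow_box (M : KAModel) (φ : FormM) (x : M.World) :
    BddBelow {v : ℝ | ∃ y, M.R x y ∧ M.val φ y = v} := by
  refine ⟨-(bnd M φ), ?_⟩
  rintro v ⟨y, _, rfl⟩; exact (abs_le.1 (abs_val_le M φ y)).1

lemma val_iter (M : KAModel) (n : ℕ) (φ : FormM) (x : M.World) :
    M.val (iterM n φ) x = n * M.val φ x := by
  induction n with
  | zero => simp [iterM, zeroM, KAModel.val]
  | succ n ih =>
    simp only [iterM, conjM, negM, zeroM, KAModel.val, ih]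
    push_cast; ring

/-- Soundness of the axiom system K(A_m): every ℒ_Am□-formula
derivable in K(A_m) is K(A)-valid. -/
theorem stmt_5 (φ : FormM) : KAm φ → KAValid φ := by
  intro h
  induction h with
  | axB φ ψ χ => intro M x; simp [KAModel.val]
  | axC φ ψ χ => intro M x; simp only [KAModel.val]; linarith
  | axI φ => intro M x; simp [KAModel.val]
  | axA φ ψ => intro M x; simp [KAModel.val]
  | axK φ ψ =>
    intro M x
    show 0 ≤ (sInf {v : ℝ | ∃ y, M.R x y ∧ M.val ψ y = v}
        - sInf {v : ℝ | ∃ y, M.R x y ∧ M.val φ y = v})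
        - sInf {v : ℝ | ∃ y, M.R x y ∧ M.val (.imp φ ψ) y = v}
    by_cases hE : ∃ y, M.R x y
    · obtain ⟨y0, hy0⟩ := hE
      have h1 : sInf {v : ℝ | ∃ y, M.R x y ∧ M.val (.imp φ ψ) y = v}
          + sInf {v : ℝ | ∃ y, M.R x y ∧ M.val φ y = v}
          ≤ sInf {v : ℝ | ∃ y, M.R x y ∧ M.val ψ y = v} := by
        refine le_csInf ⟨M.val ψ y0, ⟨y0, hy0, rfl⟩⟩ ?_
        rintro b ⟨y, hy, rfl⟩
        have h2 : sInf {v : ℝ | ∃ y, M.R x y ∧ M.val (.imp φ ψ) y = v}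
            ≤ M.val ψ y - M.val φ y :=
          csInf_le (bddBelow_box M _ x) ⟨y, hy, rfl⟩
        have h3 : sInf {v : ℝ | ∃ y, M.R x y ∧ M.val φ y = v} ≤ M.val φ y :=
          csInf_le (bddBelow_box M _ x) ⟨y, hy, rfl⟩
        linarith
      linarith
    · have he : ∀ (χ : FormM), {v : ℝ | ∃ y, M.R x y ∧ M.val χ y = v} = ∅ := by
        intro χ; ext v; simp only [Set.mem_setOf_eq, Set.mem_empty_iff_false, iff_false]
        rintro ⟨y, hy, -⟩; exact hE ⟨y, hy⟩
      rw [he, he, he, Real.sInf_empty]; simp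
  | axD n φ hn =>
    intro M x
    show 0 ≤ M.val (iterM n (.box φ)) x - M.val (.box (iterM n φ)) x
    have h1 : M.val (iterM n (.box φ)) x
        = n * sInf {v : ℝ | ∃ y, M.R x y ∧ M.val φ y = v} := val_iter M n _ x
    have hset : {v : ℝ | ∃ y, M.R x y ∧ M.val (iterM n φ) y = v}
        = (n : ℝ) • {v : ℝ | ∃ y, M.R x y ∧ M.val φ y = v} := by
      ext v
      simp only [Set.mem_setOf_eq, Set.mem_smul_set]
      constructor
      · rintro ⟨y, hy, rfl⟩; exact ⟨M.val φ y, ⟨y, hy, rfl⟩, (val_iter M n φ y).symm⟩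
      · rintro ⟨w, ⟨y, hy, rfl⟩, rfl⟩; exact ⟨y, hy, val_iter M n φ y⟩
    have h2 : M.val (.box (iterM n φ)) x
        = n * sInf {v : ℝ | ∃ y, M.R x y ∧ M.val φ y = v} := by
      show sInf {v : ℝ | ∃ y, M.R x y ∧ M.val (iterM n φ) y = v} = _
      rw [hset, Real.sInf_smul_of_nonneg (by positivity), smul_eq_mul]
    rw [h1, h2]; simp
  | mp hφ hi ih1 ih2 =>
    intro M x
    have := ih1 M x
    have h2 := ih2 M x
    simp only [KAModel.val] at h2
    linarith
  | nec hφ ih =>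
    intro M x
    show 0 ≤ sInf {v : ℝ | ∃ y, M.R x y ∧ M.val _ y = v}
    apply Real.sInf_nonneg
    rintro v ⟨y, _, rfl⟩
    exact ih M y
  | con n hn hiter ih =>
    intro M x
    have := ih M x
    rw [val_iter] at this
    have hn' : (0:ℝ) < n := by exact_mod_cast lt_of_lt_of_le two_pos hn
    nlinarith

end Aux
end

section
/- A sequent Γ ⇒ Δ is derivable in the sequent calculus GK(A_m) if and only if its formula interpretation I(Γ ⇒ Δ) is derivable in the axiom system K(A_m). -/
/-- A sequent: an ordered pair of finite multisets of ℒ_Am□-formulas. -/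
abbrev SeqM := Multiset FormM × Multiset FormM

/-- The sequent calculus GK(A_m). -/
inductive GKAm : SeqM → Prop
  | id (Δ : Multiset FormM) : GKAm (Δ, Δ)
  | cut {Γ Δ Θ Λ : Multiset FormM} {φ : FormM} :
      GKAm (Γ + {φ}, Δ) → GKAm (Θ, {φ} + Λ) → GKAm (Γ + Θ, Λ + Δ)
  | mix {Γ Δ Θ Λ : Multiset FormM} :
      GKAm (Γ, Δ) → GKAm (Θ, Λ) → GKAm (Γ + Θ, Λ + Δ)
  | sc {Γ Δ : Multiset FormM} (n : ℕ) : 2 ≤ n →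
      GKAm (n • Γ, n • Δ) → GKAm (Γ, Δ)
  | impL {Γ Δ : Multiset FormM} {φ ψ : FormM} :
      GKAm (Γ + {ψ}, {φ} + Δ) → GKAm (Γ + {FormM.imp φ ψ}, Δ)
  | impR {Γ Δ : Multiset FormM} {φ ψ : FormM} :
      GKAm (Γ + {φ}, {ψ} + Δ) → GKAm (Γ, {FormM.imp φ ψ} + Δ)
  | boxn {Γ : Multiset FormM} {φ : FormM} (n : ℕ) :
      GKAm (Γ, n • ({φ} : Multiset FormM)) →
      GKAm (Γ.map FormM.box, n • ({FormM.box φ} : Multiset FormM))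

/-- `bigConj [φ₁, …, φₙ] = φ₁ & … & φₙ`, with the empty list interpreted as 0̄. -/
def bigConj : List FormM → FormM
  | [] => zeroM
  | [φ] => φ
  | φ :: ψ :: rest => conjM φ (bigConj (ψ :: rest))

/-- The formula interpretation `I(Γ ⇒ Δ) := (&Γ) → (&Δ)` of a sequent. -/
def interp (Γ Δ : List FormM) : FormM := .imp (bigConj Γ) (bigConj Δ)

namespace KAmTools
open FormM

abbrev T (φ : FormM) : Prop := KAm φ

lemma comp {a b c : FormM} (h1 : T (imp a b)) (h2 : T (imp b c)) : T (imp a c) :=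
  KAm.mp h2 (KAm.mp h1 (KAm.axB a b c))

lemma suffixing {a b : FormM} (c : FormM) (h : T (imp a b)) :
    T (imp (imp b c) (imp a c)) := KAm.mp h (KAm.axB a b c)

lemma prefixing {c d : FormM} (b : FormM) (h : T (imp c d)) :
    T (imp (imp b c) (imp b d)) :=
  KAm.mp h (KAm.mp (KAm.axB b c d) (KAm.axC (imp b c) (imp c d) (imp b d)))

lemma swapT {a b c : FormM} (h : T (imp a (imp b c))) : T (imp b (imp a c)) :=
  KAm.mp h (KAm.axC a b c)

lemma assertion (a b : FormM) : T (imp a (imp (imp a b) b)) := swapT (KAm.axI (imp a b))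

def Keq (a b : FormM) : Prop := T (imp a b) ∧ T (imp b a)

lemma Keq.refl (a : FormM) : Keq a a := ⟨KAm.axI a, KAm.axI a⟩
lemma Keq.symm {a b} (h : Keq a b) : Keq b a := ⟨h.2, h.1⟩
lemma Keq.trans {a b c} (h1 : Keq a b) (h2 : Keq b c) : Keq a c :=
  ⟨comp h1.1 h2.1, comp h2.2 h1.2⟩
lemma Keq.impc {a b c d} (h1 : Keq a b) (h2 : Keq c d) : Keq (imp a c) (imp b d) :=
  ⟨comp (suffixing c h1.2) (prefixing b h2.1), comp (suffixing d h1.1) (prefixing a h2.2)⟩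
lemma Keq.boxc {a b} (h : Keq a b) : Keq (box a) (box b) :=
  ⟨KAm.mp (KAm.nec h.1) (KAm.axK a b), KAm.mp (KAm.nec h.2) (KAm.axK b a)⟩
lemma Keq.mpT {a b} (h : Keq a b) (ha : T a) : T b := KAm.mp ha h.1
lemma Keq.negc {a b} (h : Keq a b) : Keq (negM a) (negM b) := h.impc (Keq.refl zeroM)
lemma Keq.conjc {a b c d} (h1 : Keq a b) (h2 : Keq c d) :
    Keq (conjM a c) (conjM b d) := h1.negc.impc h2

lemma rwL {a a' b : FormM} (e : Keq a a') (h : T (imp a' b)) : T (imp a b) := comp e.1 h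
lemma rwR {a b b' : FormM} (e : Keq b b') (h : T (imp a b')) : T (imp a b) := comp h e.2

lemma e_P1 (a b : FormM) : Keq a (imp (imp a b) b) := ⟨assertion a b, KAm.axA a b⟩
lemma e_swap (a b c : FormM) : Keq (imp a (imp b c)) (imp b (imp a c)) :=
  ⟨KAm.axC a b c, KAm.axC b a c⟩

lemma e_ii (a b : FormM) : Keq (imp (imp a a) b) b :=
  (((Keq.refl (imp a a)).impc (e_P1 b a)).trans
    ((e_swap (imp a a) (imp b a) a).trans
      ((Keq.refl (imp b a)).impc (e_P1 a a).symm))).trans (e_P1 b a).symm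

lemma t_zero : T zeroM := KAm.axI (var 0)

lemma e_zimp (b : FormM) : Keq (imp zeroM b) b := e_ii (var 0) b

lemma e_zero (a : FormM) : Keq zeroM (imp a a) :=
  ⟨KAm.mp (KAm.axI a) (e_ii (var 0) (imp a a)).2,
   KAm.mp t_zero (e_ii a zeroM).2⟩

lemma t_imp_zero {b : FormM} (h : T b) : T (imp zeroM b) := KAm.mp h (e_zimp b).2

lemma e_dne (a : FormM) : Keq (negM (negM a)) a := ⟨KAm.axA a zeroM, assertion a zeroM⟩

lemma e_p4 (a b : FormM) : Keq (negM (imp a b)) (imp b a) :=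
  (((Keq.refl (imp a b)).impc (e_zero b)).trans
    (e_swap (imp a b) b b)).trans ((Keq.refl b).impc (e_P1 a b).symm)

lemma e_p4' (a b : FormM) : Keq (imp (negM a) (negM b)) (imp b a) :=
  (e_swap (negM a) b zeroM).trans ((Keq.refl b).impc (e_dne a))

lemma e_nflip (a b : FormM) : Keq (imp (negM a) b) (imp (negM b) a) :=
  ((Keq.refl (negM a)).impc (e_dne b).symm).trans (e_p4' a (negM b))

lemma e_S (x y c : FormM) : Keq (imp (imp x y) c) (imp (negM x) (imp y c)) := by
  have h1 : Keq (imp (imp x y) c) (imp (negM c) (negM (imp x y))) :=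
    ((Keq.refl (imp x y)).impc (e_dne c).symm).trans (e_swap (imp x y) (negM c) zeroM)
  have h2 : Keq (imp (negM c) (negM (imp x y))) (imp (negM c) (imp y x)) :=
    (Keq.refl (negM c)).impc (e_p4 x y)
  have h3 : Keq (imp (negM c) (imp y x)) (imp y (imp (negM c) x)) := e_swap _ _ _
  have h4 : Keq (imp y (imp (negM c) x)) (imp y (imp (negM x) c)) :=
    (Keq.refl y).impc (e_nflip c x)
  have h5 : Keq (imp y (imp (negM x) c)) (imp (negM x) (imp y c)) := e_swap _ _ _
  exact (((h1.trans h2).trans h3).trans h4).trans h5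

lemma e_res (a b c : FormM) : Keq (imp (conjM a b) c) (imp a (imp b c)) :=
  (e_S (negM a) b c).trans ((e_dne a).impc (Keq.refl (imp b c)))

lemma e_two (a b c d : FormM) :
    Keq (conjM (imp a b) (imp c d)) (imp (imp b c) (imp a d)) := by
  have h1 : Keq (conjM (imp a b) (imp c d)) (imp (imp b a) (imp c d)) :=
    (e_p4 a b).impc (Keq.refl (imp c d))
  have h2 : Keq (imp (imp b a) (imp c d)) (imp (negM b) (imp a (imp c d))) := e_S _ _ _
  have h3 : Keq (imp (negM b) (imp a (imp c d))) (imp (negM b) (imp c (imp a d))) :=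
    (Keq.refl (negM b)).impc (e_swap a c d)
  have h4 : Keq (imp (imp b c) (imp a d)) (imp (negM b) (imp c (imp a d))) := e_S _ _ _
  exact ((h1.trans h2).trans h3).trans h4.symm

lemma e_imp_conj (a b c d : FormM) :
    Keq (imp (conjM a b) (conjM c d)) (conjM (imp a c) (imp b d)) := by
  have h1 : Keq (imp (conjM a b) (conjM c d)) (imp a (imp b (conjM c d))) := e_res _ _ _
  have h2 : Keq (imp a (imp b (conjM c d))) (imp a (imp (negM c) (imp b d))) :=
    (Keq.refl a).impc (e_swap b (negM c) d)
  have h3 : Keq (imp a (imp (negM c) (imp b d))) (imp (negM c) (imp a (imp b d))) :=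
    e_swap _ _ _
  have h4 : Keq (conjM (imp a c) (imp b d)) (imp (imp c b) (imp a d)) := e_two _ _ _ _
  have h5 : Keq (imp (imp c b) (imp a d)) (imp (negM c) (imp b (imp a d))) := e_S _ _ _
  have h6 : Keq (imp (negM c) (imp b (imp a d))) (imp (negM c) (imp a (imp b d))) :=
    (Keq.refl (negM c)).impc (e_swap b a d)
  exact ((h1.trans h2).trans h3).trans (((h4.trans h5).trans h6).symm)

lemma e_comm (a b : FormM) : Keq (conjM a b) (conjM b a) := e_nflip a b

lemma e_assoc (a b c : FormM) : Keq (conjM (conjM a b) c) (conjM a (conjM b c)) :=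
  (((e_p4 (negM a) b).impc (Keq.refl c)).trans (e_S b (negM a) c)).trans
    (e_swap (negM b) (negM a) c)

lemma e_czr (a : FormM) : Keq (conjM a zeroM) a := e_dne a
lemma e_czl (a : FormM) : Keq (conjM zeroM a) a := (e_comm _ _).trans (e_czr a)

lemma mcon {a b c d : FormM} (h1 : T (imp a b)) (h2 : T (imp c d)) :
    T (imp (conjM a c) (conjM b d)) :=
  comp (suffixing c (KAm.mp h1 (KAm.axB a b zeroM))) (prefixing (negM b) h2)

lemma cancel {x y φ : FormM} (h : T (imp (conjM x φ) (conjM y φ))) : T (imp x y) :=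
  ((((e_imp_conj x φ y φ).trans
      ((Keq.refl (negM (imp x y))).impc (e_zero φ).symm)).trans (e_czr (imp x y)))).mpT h

lemma conj_intro (a b : FormM) : T (imp a (imp b (conjM a b))) :=
  KAm.mp (KAm.axI (conjM a b)) (e_res a b (conjM a b)).1

lemma box_conj (a b : FormM) : T (imp (conjM (box a) (box b)) (box (conjM a b))) := by
  have h1 : T (imp (box a) (box (imp b (conjM a b)))) :=
    KAm.mp (KAm.nec (conj_intro a b)) (KAm.axK a (imp b (conjM a b)))
  have h2 : T (imp (box a) (imp (box b) (box (conjM a b)))) :=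
    comp h1 (KAm.axK b (conjM a b))
  exact (e_res (box a) (box b) (box (conjM a b))).symm.mpT h2

lemma box_zero : T (imp (box zeroM) zeroM) := by
  have h1 : T (imp (conjM (box zeroM) (box zeroM)) (box zeroM)) :=
    rwR ((e_czr zeroM).symm.boxc) (box_conj zeroM zeroM)
  exact cancel (rwR (e_czl (box zeroM)) h1)

lemma dn_all (n : ℕ) (φ : FormM) : T (imp (box (iterM n φ)) (iterM n (box φ))) := by
  match n with
  | 0 => exact box_zero
  | 1 =>
    have : Keq (box (iterM 1 φ)) (box φ) := (e_czr φ).boxc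
    exact rwL this ((e_czr (box φ)).symm.1)
  | (n+2) => exact KAm.axD (n+2) φ (by omega)

end KAmTools
namespace KAmTools
open FormM

noncomputable def mconj (Γ : Multiset FormM) : FormM := bigConj Γ.toList

lemma bigConj_cons (φ : FormM) (l : List FormM) :
    Keq (bigConj (φ :: l)) (conjM φ (bigConj l)) := by
  cases l with
  | nil => exact (e_czr φ).symm
  | cons b r => exact Keq.refl _

lemma bigConj_append (l1 l2 : List FormM) :
    Keq (bigConj (l1 ++ l2)) (conjM (bigConj l1) (bigConj l2)) := by
  induction l1 with
  | nil => exact (e_czl _).symm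
  | cons a l1 ih =>
    have h1 : Keq (bigConj (a :: (l1 ++ l2))) (conjM a (bigConj (l1 ++ l2))) :=
      bigConj_cons _ _
    have h2 := (Keq.refl a).conjc ih
    have h3 := (e_assoc a (bigConj l1) (bigConj l2)).symm
    have h4 := ((bigConj_cons a l1).symm.conjc (Keq.refl (bigConj l2)))
    exact ((h1.trans h2).trans h3).trans h4

lemma bigConj_perm {l1 l2 : List FormM} (h : l1.Perm l2) :
    Keq (bigConj l1) (bigConj l2) := by
  induction h with
  | nil => exact Keq.refl _
  | cons a _ ih =>
    exact ((bigConj_cons _ _).trans ((Keq.refl a).conjc ih)).trans (bigConj_cons _ _).symm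
  | swap a b l =>
    have h1 : Keq (bigConj (b :: a :: l)) (conjM b (conjM a (bigConj l))) :=
      (bigConj_cons _ _).trans ((Keq.refl b).conjc (bigConj_cons _ _))
    have h2 : Keq (bigConj (a :: b :: l)) (conjM a (conjM b (bigConj l))) :=
      (bigConj_cons _ _).trans ((Keq.refl a).conjc (bigConj_cons _ _))
    have h3 : Keq (conjM b (conjM a (bigConj l))) (conjM a (conjM b (bigConj l))) :=
      ((e_assoc _ _ _).symm.trans ((e_comm b a).conjc (Keq.refl _))).trans (e_assoc _ _ _)
    exact (h1.trans h3).trans h2.symm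
  | trans _ _ ih1 ih2 => exact ih1.trans ih2

lemma mconj_coe (l : List FormM) : Keq (mconj (↑l : Multiset FormM)) (bigConj l) :=
  bigConj_perm (Multiset.coe_eq_coe.mp (by simp))

lemma mc_add (Γ Θ : Multiset FormM) :
    Keq (mconj (Γ + Θ)) (conjM (mconj Γ) (mconj Θ)) := by
  have hp : (Γ + Θ).toList.Perm (Γ.toList ++ Θ.toList) :=
    Multiset.coe_eq_coe.mp (by rw [← Multiset.coe_add]; simp)
  exact (bigConj_perm hp).trans
    ((bigConj_append _ _).trans ((Keq.refl _).conjc (Keq.refl _)))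

lemma mc_single (φ : FormM) : Keq (mconj ({φ} : Multiset FormM)) φ :=
  bigConj_perm (l2 := [φ]) (Multiset.coe_eq_coe.mp (by simp))

lemma mc_zero : mconj 0 = zeroM := by
  show bigConj (Multiset.toList 0) = zeroM
  rw [Multiset.toList_zero]
  rfl

lemma mc_cons (φ : FormM) (Γ : Multiset FormM) :
    Keq (mconj (φ ::ₘ Γ)) (conjM φ (mconj Γ)) := by
  have : (φ ::ₘ Γ) = {φ} + Γ := by simp [Multiset.singleton_add]
  rw [this]
  exact (mc_add _ _).trans ((mc_single φ).conjc (Keq.refl _))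

lemma e_iter_cong {a b : FormM} (n : ℕ) (h : Keq a b) : Keq (iterM n a) (iterM n b) := by
  induction n with
  | zero => exact Keq.refl _
  | succ n ih => exact h.conjc ih

lemma mc_nsmul (n : ℕ) (Γ : Multiset FormM) :
    Keq (mconj (n • Γ)) (iterM n (mconj Γ)) := by
  induction n with
  | zero => rw [zero_nsmul, mc_zero]; exact Keq.refl _
  | succ n ih =>
    have h0 : (n + 1) • Γ = n • Γ + Γ := succ_nsmul Γ n
    rw [h0]
    exact ((mc_add _ _).trans (ih.conjc (Keq.refl _))).trans (e_comm _ _)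

lemma e_iter_imp (n : ℕ) (a b : FormM) :
    Keq (imp (iterM n a) (iterM n b)) (iterM n (imp a b)) := by
  induction n with
  | zero => exact e_zimp zeroM
  | succ n ih =>
    show Keq (imp (conjM a (iterM n a)) (conjM b (iterM n b)))
      (conjM (imp a b) (iterM n (imp a b)))
    exact (e_imp_conj a (iterM n a) b (iterM n b)).trans ((Keq.refl (imp a b)).conjc ih)

lemma box_mconj (Γ : Multiset FormM) :
    T (imp (mconj (Γ.map box)) (box (mconj Γ))) := by
  induction Γ using Multiset.induction with
  | empty =>
    rw [Multiset.map_zero, mc_zero]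
    exact t_imp_zero (KAm.nec t_zero)
  | cons a Γ ih =>
    rw [Multiset.map_cons]
    have h1 : T (imp (conjM (box a) (mconj (Multiset.map box Γ)))
        (conjM (box a) (box (mconj Γ)))) := mcon (KAm.axI _) ih
    have h2 := comp h1 (box_conj a (mconj Γ))
    have h3 := comp h2 ((mc_cons a Γ).symm.boxc.1)
    exact rwL (mc_cons (box a) (Γ.map box)) h3

end KAmTools
namespace KAmTools
open FormM

lemma e_seq_add (Γ : Multiset FormM) (φ : FormM) :
    Keq (mconj (Γ + {φ})) (conjM (mconj Γ) φ) :=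
  (mc_add Γ {φ}).trans ((Keq.refl (mconj Γ)).conjc (mc_single φ))

theorem fwd : ∀ s : SeqM, GKAm s → T (imp (mconj s.1) (mconj s.2)) := by
  intro s h
  induction h with
  | id Δ => exact KAm.axI _
  | @cut Γ Δ Θ Λ φ h1 h2 ih1 ih2 =>
    have hA : T (imp (conjM (mconj Γ) φ) (mconj Δ)) := rwL (e_seq_add Γ φ).symm ih1
    have hB : T (imp (mconj Θ) (conjM φ (mconj Λ))) := by
      refine rwR ?_ ih2
      exact ((mc_add {φ} Λ).trans ((mc_single φ).conjc (Keq.refl _))).symm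
    have hadd : T (imp (conjM (conjM (mconj Γ) φ) (mconj Θ))
        (conjM (mconj Δ) (conjM φ (mconj Λ)))) := mcon hA hB
    set A := mconj Γ; set B := mconj Δ; set C := mconj Θ; set D := mconj Λ
    have eL : Keq (conjM (conjM A C) φ) (conjM (conjM A φ) C) :=
      ((e_assoc A C φ).trans ((Keq.refl A).conjc (e_comm C φ))).trans (e_assoc A φ C).symm
    have eR : Keq (conjM B (conjM φ D)) (conjM (conjM D B) φ) := by
      have h1 : Keq (conjM B (conjM φ D)) (conjM B (conjM D φ)) :=
        (Keq.refl B).conjc (e_comm φ D)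
      have h2 : Keq (conjM B (conjM D φ)) (conjM (conjM B D) φ) := (e_assoc B D φ).symm
      have h3 : Keq (conjM (conjM B D) φ) (conjM (conjM D B) φ) :=
        (e_comm B D).conjc (Keq.refl φ)
      exact (h1.trans h2).trans h3
    have hc : T (imp (conjM (conjM A C) φ) (conjM (conjM D B) φ)) :=
      rwL eL (rwR eR.symm hadd)
    have := cancel hc
    exact rwL (mc_add Γ Θ) (rwR (mc_add Λ Δ) this)
  | @mix Γ Δ Θ Λ h1 h2 ih1 ih2 =>
    have := mcon ih1 ih2
    exact rwL (mc_add Γ Θ) (rwR ((mc_add Λ Δ).trans (e_comm _ _)) this)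
  | @sc Γ Δ n hn h ih =>
    have h1 : T (imp (iterM n (mconj Γ)) (iterM n (mconj Δ))) :=
      rwL (mc_nsmul n Γ).symm (rwR (mc_nsmul n Δ).symm ih)
    exact KAm.con n hn ((e_iter_imp n (mconj Γ) (mconj Δ)).mpT h1)
  | @impL Γ Δ φ ψ h ih =>
    set A := mconj Γ; set D := mconj Δ
    have h1 : T (imp (conjM A ψ) (conjM φ D)) := by
      refine rwL (e_seq_add Γ ψ).symm (rwR ?_ ih)
      exact ((mc_add {φ} Δ).trans ((mc_single φ).conjc (Keq.refl _))).symm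
    have h2 : T (imp (imp φ ψ) (imp A D)) :=
      (e_two A φ ψ D).mpT ((e_imp_conj A ψ φ D).mpT h1)
    have h3 : T (imp (conjM A (imp φ ψ)) D) :=
      (e_res A (imp φ ψ) D).symm.mpT (swapT h2)
    exact rwL (e_seq_add Γ (imp φ ψ)) h3
  | @impR Γ Δ φ ψ h ih =>
    set A := mconj Γ; set D := mconj Δ
    have h1 : T (imp (conjM A φ) (conjM ψ D)) := by
      refine rwL (e_seq_add Γ φ).symm (rwR ?_ ih)
      exact ((mc_add {ψ} Δ).trans ((mc_single ψ).conjc (Keq.refl _))).symm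
    have h2 : T (imp (imp ψ φ) (imp A D)) :=
      (e_two A ψ φ D).mpT ((e_imp_conj A φ ψ D).mpT h1)
    have h3 : T (imp A (imp (imp ψ φ) D)) := swapT h2
    have h4 : T (imp A (conjM (imp φ ψ) D)) := by
      refine ((Keq.refl A).impc ?_).symm.mpT h3
      exact (e_p4 φ ψ).impc (Keq.refl D)
    refine rwR ?_ h4
    exact (mc_add {imp φ ψ} Δ).trans ((mc_single _).conjc (Keq.refl _))
  | @boxn Γ φ n h ih =>
    have e1 : Keq (mconj (n • ({φ} : Multiset FormM))) (iterM n φ) :=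
      (mc_nsmul n {φ}).trans (e_iter_cong n (mc_single φ))
    have h1 : T (imp (mconj Γ) (iterM n φ)) := rwR e1.symm ih
    have h2 : T (imp (box (mconj Γ)) (box (iterM n φ))) :=
      KAm.mp (KAm.nec h1) (KAm.axK _ _)
    have h3 : T (imp (box (mconj Γ)) (iterM n (box φ))) := comp h2 (dn_all n φ)
    have h4 : T (imp (mconj (Γ.map box)) (iterM n (box φ))) := comp (box_mconj Γ) h3
    refine rwR ?_ h4
    exact (mc_nsmul n {box φ}).trans (e_iter_cong n (mc_single (box φ)))

end KAmTools
namespace KAmTools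
open FormM

lemma gk_eq {Γ Δ Γ' Δ' : Multiset FormM} (h : GKAm (Γ, Δ)) (h1 : Γ = Γ')
    (h2 : Δ = Δ') : GKAm (Γ', Δ') := h1 ▸ h2 ▸ h

lemma zeroR {Γ Δ : Multiset FormM} (h : GKAm (Γ, Δ)) : GKAm (Γ, {zeroM} + Δ) := by
  have hm := GKAm.mix (GKAm.id {var 0}) h
  have hp : GKAm (Γ + {var 0}, {var 0} + Δ) := gk_eq hm (by ac_rfl) (by ac_rfl)
  exact GKAm.impR hp

lemma zeroL {Γ Δ : Multiset FormM} (h : GKAm (Γ, Δ)) : GKAm (Γ + {zeroM}, Δ) := by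
  have hm := GKAm.mix (GKAm.id {var 0}) h
  have hp : GKAm (Γ + {var 0}, {var 0} + Δ) := gk_eq hm (by ac_rfl) (by ac_rfl)
  exact GKAm.impL hp

lemma conjR {Γ Δ : Multiset FormM} {a b : FormM}
    (h : GKAm (Γ, {a} + ({b} + Δ))) : GKAm (Γ, {conjM a b} + Δ) := by
  have h1 : GKAm (Γ + {zeroM}, {a} + ({b} + Δ)) := zeroL h
  have h2 : GKAm (Γ + {negM a}, {b} + Δ) := GKAm.impL h1
  exact GKAm.impR h2

lemma conjL {Γ Δ : Multiset FormM} {a b : FormM}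
    (h : GKAm (Γ + {a} + {b}, Δ)) : GKAm (Γ + {conjM a b}, Δ) := by
  have h1 : GKAm ((Γ + {b}) + {a}, {zeroM} + Δ) :=
    gk_eq (zeroR h) (by ac_rfl) rfl
  have h2 : GKAm (Γ + {b}, {negM a} + Δ) := GKAm.impR h1
  exact GKAm.impL h2

lemma conjL_inv {Γ Δ : Multiset FormM} {a b : FormM}
    (h : GKAm (Γ + {conjM a b}, Δ)) : GKAm (Γ + {a} + {b}, Δ) := by
  have s : GKAm (({a} + {b} : Multiset FormM), {conjM a b} + 0) := by
    refine conjR ?_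
    exact gk_eq (GKAm.id ({a} + {b})) rfl (by simp)
  have := GKAm.cut h s
  exact gk_eq this (by ac_rfl) (by simp)

lemma conjR_inv {Γ Δ : Multiset FormM} {a b : FormM}
    (h : GKAm (Γ, {conjM a b} + Δ)) : GKAm (Γ, {a} + ({b} + Δ)) := by
  have s : GKAm ((0 : Multiset FormM) + {conjM a b}, {a} + {b}) := by
    refine conjL ?_
    exact gk_eq (GKAm.id ({a} + {b})) (by simp) rfl
  have := GKAm.cut s h
  exact gk_eq this (by simp) (by ac_rfl)

lemma zero_seq_L : GKAm (({zeroM} : Multiset FormM), 0) := by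
  have : GKAm ((0 : Multiset FormM) + {var 0}, {var 0} + 0) :=
    gk_eq (GKAm.id {var 0}) (by simp) (by simp)
  have h2 := GKAm.impL this
  exact gk_eq h2 (by simp [zeroM]) rfl

lemma zero_seq_R : GKAm ((0 : Multiset FormM), {zeroM}) := by
  have : GKAm ((0 : Multiset FormM) + {var 0}, {var 0} + 0) :=
    gk_eq (GKAm.id {var 0}) (by simp) (by simp)
  have h2 := GKAm.impR this
  exact gk_eq h2 rfl (by simp [zeroM])

lemma zeroR_inv {Γ Δ : Multiset FormM} (h : GKAm (Γ, {zeroM} + Δ)) : GKAm (Γ, Δ) := by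
  have s : GKAm ((0 : Multiset FormM) + {zeroM}, 0) := gk_eq zero_seq_L (by simp) rfl
  have := GKAm.cut s h
  exact gk_eq this (by simp) (by simp)

lemma zeroL_inv {Γ Δ : Multiset FormM} (h : GKAm (Γ + {zeroM}, Δ)) : GKAm (Γ, Δ) := by
  have s : GKAm ((0 : Multiset FormM), {zeroM} + 0) := gk_eq zero_seq_R rfl (by simp)
  have := GKAm.cut h s
  exact gk_eq this (by simp) (by simp)

lemma impR_inv {Γ Δ : Multiset FormM} {a b : FormM}
    (h : GKAm (Γ, {imp a b} + Δ)) : GKAm (Γ + {a}, {b} + Δ) := by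
  have s0 : GKAm (({a} : Multiset FormM) + {b}, {a} + {b}) := GKAm.id _
  have s1 : GKAm (({a} : Multiset FormM) + {imp a b}, {b}) := GKAm.impL s0
  have := GKAm.cut s1 h
  exact gk_eq this (by ac_rfl) (by ac_rfl)

lemma listL : ∀ (l : List FormM) (Γ Δ : Multiset FormM),
    GKAm (Γ + {bigConj l}, Δ) → GKAm (Γ + ↑l, Δ) := by
  intro l
  induction l with
  | nil =>
    intro Γ Δ h
    have := zeroL_inv h
    exact gk_eq this (by simp) rfl
  | cons a rest ih =>
    intro Γ Δ h
    cases rest with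
    | nil => exact gk_eq h (by simp [bigConj, Multiset.singleton_add]) rfl
    | cons b rest' =>
      have h1 : GKAm (Γ + {a} + {bigConj (b :: rest')}, Δ) := conjL_inv h
      have h2 := ih (Γ + {a}) Δ h1
      refine gk_eq h2 ?_ rfl
      show Γ + {a} + ↑(b :: rest') = Γ + ((a : FormM) ::ₘ (↑(b :: rest') : Multiset FormM))
      rw [← Multiset.singleton_add]; ac_rfl

lemma listR : ∀ (l : List FormM) (Γ Δ : Multiset FormM),
    GKAm (Γ, {bigConj l} + Δ) → GKAm (Γ, ↑l + Δ) := by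
  intro l
  induction l with
  | nil =>
    intro Γ Δ h
    have := zeroR_inv h
    exact gk_eq this rfl (by simp)
  | cons a rest ih =>
    intro Γ Δ h
    cases rest with
    | nil => exact gk_eq h rfl (by simp [bigConj, Multiset.singleton_add])
    | cons b rest' =>
      have h1 : GKAm (Γ, {a} + ({bigConj (b :: rest')} + Δ)) := conjR_inv h
      have h2 := ih Γ ({a} + Δ) (gk_eq h1 rfl (by ac_rfl))
      refine gk_eq h2 rfl ?_
      show ↑(b :: rest') + ({a} + Δ) = ((a : FormM) ::ₘ (↑(b :: rest') : Multiset FormM)) + Δ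
      rw [← Multiset.singleton_add]; ac_rfl

lemma packIter {χ : FormM} : ∀ (n : ℕ) (Γ Δ : Multiset FormM),
    GKAm (Γ, n • ({χ} : Multiset FormM) + Δ) → GKAm (Γ, {iterM n χ} + Δ) := by
  intro n
  induction n with
  | zero =>
    intro Γ Δ h
    exact zeroR (gk_eq h rfl (by simp))
  | succ n ih =>
    intro Γ Δ h
    have h0 : (n + 1) • ({χ} : Multiset FormM) + Δ = {χ} + (n • ({χ} : Multiset FormM) + Δ) := by
      rw [succ_nsmul]; ac_rfl
    have h1 : GKAm (Γ, n • ({χ} : Multiset FormM) + ({χ} + Δ)) :=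
      gk_eq h rfl (by rw [h0]; ac_rfl)
    have h2 := ih Γ ({χ} + Δ) h1
    have h3 : GKAm (Γ, {χ} + ({iterM n χ} + Δ)) := gk_eq h2 rfl (by ac_rfl)
    exact conjR h3

lemma unpackIter {χ : FormM} : ∀ (n : ℕ) (Γ Δ : Multiset FormM),
    GKAm (Γ, {iterM n χ} + Δ) → GKAm (Γ, n • ({χ} : Multiset FormM) + Δ) := by
  intro n
  induction n with
  | zero =>
    intro Γ Δ h
    exact gk_eq (zeroR_inv h) rfl (by simp)
  | succ n ih =>
    intro Γ Δ h
    have h1 : GKAm (Γ, {χ} + ({iterM n χ} + Δ)) := conjR_inv h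
    have h2 := ih Γ ({χ} + Δ) (gk_eq h1 rfl (by ac_rfl))
    refine gk_eq h2 rfl ?_
    rw [succ_nsmul]; ac_rfl

lemma leftInv (φ : FormM) : ∀ n : ℕ, GKAm (({iterM n φ} : Multiset FormM), n • ({φ} : Multiset FormM)) := by
  intro n
  induction n with
  | zero =>
    have := zero_seq_L
    exact gk_eq this rfl (by simp)
  | succ n ih =>
    show GKAm (({conjM φ (iterM n φ)} : Multiset FormM), (n+1) • ({φ} : Multiset FormM))
    have hm := GKAm.mix (GKAm.id {φ}) ih
    have h1 : GKAm ((0 : Multiset FormM) + {φ} + {iterM n φ}, (n+1) • ({φ} : Multiset FormM)) := by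
      refine gk_eq hm (by simp) ?_
      rw [succ_nsmul]
    have h2 := conjL h1
    exact gk_eq h2 (by simp) rfl

lemma impR0 {Γ : Multiset FormM} {a b : FormM}
    (h : GKAm (Γ + {a}, {b})) : GKAm (Γ, {imp a b}) := by
  have h1 : GKAm (Γ + {a}, {b} + 0) := gk_eq h rfl (by simp)
  exact gk_eq (GKAm.impR h1) rfl (by simp)

theorem hilbert_to_gk {φ : FormM} (h : KAm φ) : GKAm ((0 : Multiset FormM), {φ}) := by
  induction h with
  | axB a b c =>
    have t0 : GKAm (({a} : Multiset FormM) + {c} + {b}, {a} + ({b} + {c})) :=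
      gk_eq (GKAm.id ({a} + {b} + {c})) (by ac_rfl) (by ac_rfl)
    have t1 := GKAm.impL t0
    have t2 : GKAm (({imp a b} : Multiset FormM) + {a} + {c}, {b} + {c}) :=
      gk_eq t1 (by ac_rfl) rfl
    have t3 := GKAm.impL t2
    have t4 : GKAm (({imp a b} : Multiset FormM) + {imp b c} + {a}, {c}) :=
      gk_eq t3 (by ac_rfl) rfl
    have t5 := impR0 t4
    have t6 := impR0 t5
    have t7 : GKAm ((0 : Multiset FormM) + {imp a b},
        {imp (imp b c) (imp a c)}) := gk_eq t6 (by simp) rfl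
    exact impR0 t7
  | axC a b c =>
    have u0 : GKAm (({b} : Multiset FormM) + {a} + {c}, {b} + ({a} + {c})) :=
      gk_eq (GKAm.id ({a} + {b} + {c})) (by ac_rfl) (by ac_rfl)
    have u1 := GKAm.impL u0
    have u2 := GKAm.impL u1
    have u3 : GKAm (({imp a (imp b c)} : Multiset FormM) + {b} + {a}, {c}) :=
      gk_eq u2 (by ac_rfl) rfl
    have u4 := impR0 u3
    have u5 := impR0 u4
    have u6 : GKAm ((0 : Multiset FormM) + {imp a (imp b c)},
        {imp b (imp a c)}) := gk_eq u5 (by simp) rfl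
    exact impR0 u6
  | axI a =>
    exact impR0 (gk_eq (GKAm.id {a}) (by simp) rfl)
  | axA a b =>
    have t0 : GKAm (({b} : Multiset FormM) + {a}, {b} + {a}) :=
      gk_eq (GKAm.id ({a} + {b})) (by ac_rfl) (by ac_rfl)
    have t1 := GKAm.impR t0
    have t2 : GKAm ((0 : Multiset FormM) + {b}, {imp a b} + {a}) :=
      gk_eq t1 (by simp) rfl
    have t3 := GKAm.impL t2
    have t4 : GKAm ((0 : Multiset FormM) + {imp (imp a b) b}, {a}) :=
      gk_eq t3 rfl rfl
    exact impR0 t4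
  | axK a b =>
    have v0 : GKAm (({a} : Multiset FormM) + {b}, {a} + {b}) := GKAm.id _
    have v1 := GKAm.impL v0
    have v2 : GKAm (({imp a b} : Multiset FormM) + {a},
        (1 : ℕ) • ({b} : Multiset FormM)) := gk_eq v1 (by ac_rfl) (by simp)
    have v3 := GKAm.boxn 1 v2
    have v4 : GKAm (({box (imp a b)} : Multiset FormM) + {box a}, {box b}) := by
      refine gk_eq v3 ?_ (by simp)
      simp [Multiset.singleton_add]
    have v5 := impR0 v4
    have v6 : GKAm ((0 : Multiset FormM) + {box (imp a b)},
        {imp (box a) (box b)}) := gk_eq v5 (by simp) rfl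
    exact impR0 v6
  | axD n a hn =>
    have s0 : GKAm (({iterM n a} : Multiset FormM), n • ({a} : Multiset FormM)) :=
      leftInv a n
    have s1 := GKAm.boxn n s0
    have s2 : GKAm (({box (iterM n a)} : Multiset FormM),
        n • ({box a} : Multiset FormM) + 0) := by
      refine gk_eq s1 (by simp) (by simp)
    have s3 := packIter n _ 0 s2
    have s4 : GKAm ((0 : Multiset FormM) + {box (iterM n a)},
        {iterM n (box a)}) := gk_eq s3 (by simp) (by simp)
    exact impR0 s4
  | @mp a b h1 h2 ih1 ih2 =>
    have g0 : GKAm ((0 : Multiset FormM), {imp a b} + 0) := gk_eq ih2 rfl (by simp)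
    have g1 := impR_inv g0
    have g2 : GKAm ((0 : Multiset FormM) + {a}, ({b} : Multiset FormM)) :=
      gk_eq g1 rfl (by simp)
    have g3 : GKAm ((0 : Multiset FormM), {a} + 0) := gk_eq ih1 rfl (by simp)
    have := GKAm.cut g2 g3
    exact gk_eq this (by simp) (by simp)
  | @nec a h ih =>
    have p : GKAm ((0 : Multiset FormM), (1 : ℕ) • ({a} : Multiset FormM)) :=
      gk_eq ih rfl (by simp)
    have := GKAm.boxn 1 p
    exact gk_eq this (by simp) (by simp)
  | @con n a hn h ih =>
    have u0 : GKAm ((0 : Multiset FormM), {iterM n a} + 0) := gk_eq ih rfl (by simp)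
    have u := unpackIter n 0 0 u0
    have u2 : GKAm (n • (0 : Multiset FormM), n • ({a} : Multiset FormM)) :=
      gk_eq u (by simp) (by simp)
    exact GKAm.sc n hn u2

end KAmTools

/-- A sequent Γ ⇒ Δ is derivable in GK(A_m) iff its formula
interpretation I(Γ ⇒ Δ) is derivable in the axiom system K(A_m). -/
theorem stmt_6 (Γ Δ : List FormM) :
    GKAm ((↑Γ : Multiset FormM), (↑Δ : Multiset FormM)) ↔ KAm (interp Γ Δ) := by
  constructor
  · intro h
    have hf := KAmTools.fwd _ h
    exact ((KAmTools.mconj_coe Γ).impc (KAmTools.mconj_coe Δ)).mpT hf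
  · intro h
    have g0 := KAmTools.hilbert_to_gk h
    have g0' : GKAm ((0 : Multiset FormM),
        {FormM.imp (bigConj Γ) (bigConj Δ)} + 0) :=
      KAmTools.gk_eq g0 rfl (by simp [interp])
    have g1 := KAmTools.impR_inv g0'
    have g2 := KAmTools.listL Γ 0 _ g1
    have g3 := KAmTools.listR Δ (↑Γ : Multiset FormM) 0
      (KAmTools.gk_eq g2 (by simp) rfl)
    exact KAmTools.gk_eq g3 rfl (by simp)
end

section
/- The rule (□_{k,n}) is GK(A_m)-derivable: for all k ≥ 1, n ≥ 0, finite multisets Γ, Δ, Γ₀, Γ₁, …, Γₙ of ℒ_Am□-formulas with kΓ = Γ₀ ⊎ Γ₁ ⊎ … ⊎ Γₙ, and formulas φ₁, …, φₙ, there is a GK(A_m)-derivation of the sequent Δ, □Γ ⇒ □φ₁, …, □φₙ, Δ from the sequents Γ₀ ⇒ and Γᵢ ⇒ k[φᵢ] (1 ≤ i ≤ n) taken as leaves. -/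
/-- GK(A_m)-derivations from a set `Y` of sequents taken as leaves:
a finite tree of sequents with the given root, each node either a leaf in `Y`
or following from its parents by a rule of GK(A_m). -/
inductive GKAmFrom (Y : Set SeqM) : SeqM → Prop
  | leaf {S : SeqM} : S ∈ Y → GKAmFrom Y S
  | id (Δ : Multiset FormM) : GKAmFrom Y (Δ, Δ)
  | cut {Γ Δ Θ Λ : Multiset FormM} {φ : FormM} :
      GKAmFrom Y (Γ + {φ}, Δ) → GKAmFrom Y (Θ, {φ} + Λ) → GKAmFrom Y (Γ + Θ, Λ + Δ)
  | mix {Γ Δ Θ Λ : Multiset FormM} :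
      GKAmFrom Y (Γ, Δ) → GKAmFrom Y (Θ, Λ) → GKAmFrom Y (Γ + Θ, Λ + Δ)
  | sc {Γ Δ : Multiset FormM} (n : ℕ) : 2 ≤ n →
      GKAmFrom Y (n • Γ, n • Δ) → GKAmFrom Y (Γ, Δ)
  | impL {Γ Δ : Multiset FormM} {φ ψ : FormM} :
      GKAmFrom Y (Γ + {ψ}, {φ} + Δ) → GKAmFrom Y (Γ + {FormM.imp φ ψ}, Δ)
  | impR {Γ Δ : Multiset FormM} {φ ψ : FormM} :
      GKAmFrom Y (Γ + {φ}, {ψ} + Δ) → GKAmFrom Y (Γ, {FormM.imp φ ψ} + Δ)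
  | boxn {Γ : Multiset FormM} {φ : FormM} (n : ℕ) :
      GKAmFrom Y (Γ, n • ({φ} : Multiset FormM)) →
      GKAmFrom Y (Γ.map FormM.box, n • ({FormM.box φ} : Multiset FormM))

lemma GKAmFrom.cast {Y : Set SeqM} {S T : SeqM} (h : GKAmFrom Y S) (e : S = T) :
    GKAmFrom Y T := e ▸ h

lemma mixFin {Y : Set SeqM} : ∀ {n : ℕ} (A B : Fin n → Multiset FormM),
    (∀ i, GKAmFrom Y (A i, B i)) → GKAmFrom Y (∑ i, A i, ∑ i, B i)
  | 0, A, B, _ => by simpa using GKAmFrom.id 0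
  | n + 1, A, B, h => by
    have ih := mixFin (fun i => A i.castSucc) (fun i => B i.castSucc)
      (fun i => h i.castSucc)
    refine (GKAmFrom.mix ih (h (Fin.last n))).cast ?_
    simp [Fin.sum_univ_castSucc, add_comm]

/-- The rule (□_{k,n}) is GK(A_m)-derivable: for all k ≥ 1, n ≥ 0,
multisets Γ, Δ, Γ₀, Γ₁, …, Γₙ with kΓ = Γ₀ ⊎ Γ₁ ⊎ … ⊎ Γₙ and formulas φ₁, …, φₙ,
the sequent Δ, □Γ ⇒ □φ₁, …, □φₙ, Δ is derivable from the leaves Γ₀ ⇒ and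
Γᵢ ⇒ k[φᵢ] (1 ≤ i ≤ n). -/
theorem stmt_7 (k n : ℕ) (hk : 1 ≤ k) (Γ Δ Γ₀ : Multiset FormM)
    (Γs : Fin n → Multiset FormM) (φs : Fin n → FormM)
    (hsplit : k • Γ = Γ₀ + ∑ i, Γs i) :
    GKAmFrom
      ({S | S = (Γ₀, (0 : Multiset FormM)) ∨
            ∃ i : Fin n, S = (Γs i, k • ({φs i} : Multiset FormM))})
      (Δ + Γ.map FormM.box,
        (∑ i : Fin n, ({FormM.box (φs i)} : Multiset FormM)) + Δ) := by
  set Y : Set SeqM :=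
    {S | S = (Γ₀, (0 : Multiset FormM)) ∨
          ∃ i : Fin n, S = (Γs i, k • ({φs i} : Multiset FormM))} with hY
  have l0 : GKAmFrom Y (Γ₀, (0 : ℕ) • ({zeroM} : Multiset FormM)) := by
    simpa using GKAmFrom.leaf (Or.inl rfl : (Γ₀, (0 : Multiset FormM)) ∈ Y)
  have b0 : GKAmFrom Y (Γ₀.map FormM.box, (0 : Multiset FormM)) := by
    simpa using GKAmFrom.boxn 0 l0
  have bi : ∀ i : Fin n,
      GKAmFrom Y ((Γs i).map FormM.box, k • ({FormM.box (φs i)} : Multiset FormM)) :=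
    fun i => GKAmFrom.boxn k (GKAmFrom.leaf (Or.inr ⟨i, rfl⟩))
  have m1 := mixFin (fun i => (Γs i).map FormM.box)
      (fun i => k • ({FormM.box (φs i)} : Multiset FormM)) bi
  have m2 := GKAmFrom.mix b0 m1
  have key : GKAmFrom Y (k • Γ.map FormM.box,
      k • ∑ i : Fin n, ({FormM.box (φs i)} : Multiset FormM)) := by
    refine m2.cast ?_
    have h1 : Γ₀.map FormM.box + ∑ i, (Γs i).map FormM.box
        = k • Γ.map FormM.box := by
      have hm : Multiset.map FormM.box (∑ i, Γs i) = ∑ i, (Γs i).map FormM.box :=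
        map_sum (Multiset.mapAddMonoidHom FormM.box) _ _
      rw [← hm, ← Multiset.map_add, ← hsplit, Multiset.map_nsmul]
    have h2 : (∑ i : Fin n, k • ({FormM.box (φs i)} : Multiset FormM)) + 0
        = k • ∑ i : Fin n, ({FormM.box (φs i)} : Multiset FormM) := by
      rw [add_zero, Finset.smul_sum]
    rw [Prod.mk.injEq]
    exact ⟨h1, h2⟩
  have sc : GKAmFrom Y (Γ.map FormM.box,
      ∑ i : Fin n, ({FormM.box (φs i)} : Multiset FormM)) := by
    rcases eq_or_lt_of_le hk with h | h
    · refine key.cast ?_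
      simp [← h]
    · exact GKAmFrom.sc k h key
  exact GKAmFrom.mix (GKAmFrom.id Δ) sc
end

section
/- The rules (→⇒) and (⇒→) are GK(A_m)^r-invertible; in fact, for every m ∈ ℕ: if Γ, m[φ→ψ] ⇒ Δ is GK(A_m)^r-derivable then Γ, m[ψ] ⇒ m[φ], Δ is GK(A_m)^r-derivable, and if Γ ⇒ m[φ→ψ], Δ is GK(A_m)^r-derivable then Γ, m[φ] ⇒ m[ψ], Δ is GK(A_m)^r-derivable. -/
/-- The restricted calculus GK(A_m)^r, with rules (ID), (→⇒), (⇒→) and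
(□_{k,n}). -/
inductive GKAmR : SeqM → Prop
  | id (Δ : Multiset FormM) : GKAmR (Δ, Δ)
  | impL {Γ Δ : Multiset FormM} {φ ψ : FormM} :
      GKAmR (Γ + {ψ}, {φ} + Δ) → GKAmR (Γ + {FormM.imp φ ψ}, Δ)
  | impR {Γ Δ : Multiset FormM} {φ ψ : FormM} :
      GKAmR (Γ + {φ}, {ψ} + Δ) → GKAmR (Γ, {FormM.imp φ ψ} + Δ)
  | boxkn {Γ Δ : Multiset FormM} {n : ℕ} (k : ℕ) (hk : 1 ≤ k)
      (Γ₀ : Multiset FormM) (Γs : Fin n → Multiset FormM) (φs : Fin n → FormM)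
      (hsplit : k • Γ = Γ₀ + ∑ i, Γs i)
      (h0 : GKAmR (Γ₀, (0 : Multiset FormM)))
      (hi : ∀ i : Fin n, GKAmR (Γs i, k • ({φs i} : Multiset FormM))) :
      GKAmR (Δ + Γ.map FormM.box,
        (∑ i : Fin n, ({FormM.box (φs i)} : Multiset FormM)) + Δ)

lemma GKAmR.cast {Γ Δ Γ' Δ' : Multiset FormM} (h : GKAmR (Γ, Δ))
    (h1 : Γ = Γ') (h2 : Δ = Δ') : GKAmR (Γ', Δ') := h1 ▸ h2 ▸ h

lemma invL : ∀ {S}, GKAmR S → ∀ (Γ Δ : Multiset FormM) (φ ψ : FormM),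
    S = (Γ + {FormM.imp φ ψ}, Δ) → GKAmR (Γ + {ψ}, {φ} + Δ) := by
  intro S h
  induction h with
  | id Δ0 =>
    intro Γ Δ φ ψ hS
    rw [Prod.mk.injEq] at hS
    obtain ⟨h1, h2⟩ := hS
    subst h2
    have : GKAmR ((Γ + {ψ}) + {φ}, {ψ} + ({φ} + Γ)) :=
      (GKAmR.id (Γ + {ψ} + {φ})).cast rfl (by abel)
    have := GKAmR.impR this
    exact this.cast rfl (by rw [h1]; abel)
  | @impL Γ₁ Δ₁ α β h' ih =>
    intro Γ Δ φ ψ hS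
    rw [Prod.mk.injEq] at hS
    obtain ⟨h1, h2⟩ := hS
    subst h2
    rw [show Γ₁ + {FormM.imp α β} = FormM.imp α β ::ₘ Γ₁ by
          rw [add_comm, Multiset.singleton_add],
        show Γ + {FormM.imp φ ψ} = FormM.imp φ ψ ::ₘ Γ by
          rw [add_comm, Multiset.singleton_add]] at h1
    rcases Multiset.cons_eq_cons.mp h1 with ⟨he, hΓ⟩ | ⟨_, cs, hΓ₁, hΓ⟩
    · injection he with hφ hψ
      subst hφ; subst hψ; subst hΓ
      exact h'
    · have h'' := ih (cs + {β}) ({α} + Δ₁) φ ψ (by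
        rw [Prod.mk.injEq]
        refine ⟨?_, rfl⟩
        rw [hΓ₁, ← Multiset.singleton_add]; abel)
      have h3 : GKAmR ((cs + {ψ}) + {β}, {α} + ({φ} + Δ₁)) :=
        h''.cast (by abel) (by abel)
      exact (GKAmR.impL h3).cast
        (by rw [hΓ, ← Multiset.singleton_add]; abel) rfl
  | @impR Γ₁ Δ₁ α β h' ih =>
    intro Γ Δ φ ψ hS
    rw [Prod.mk.injEq] at hS
    obtain ⟨h1, h2⟩ := hS
    subst h1
    have h'' := ih (Γ + {α}) ({β} + Δ₁) φ ψ (by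
      rw [Prod.mk.injEq]; exact ⟨by abel, rfl⟩)
    have h3 : GKAmR ((Γ + {ψ}) + {α}, {β} + ({φ} + Δ₁)) :=
      h''.cast (by abel) (by abel)
    exact (GKAmR.impR h3).cast rfl (by rw [← h2]; abel)
  | @boxkn Γb Δb n k hk Γ₀ Γs φs hsplit h0 hi ih0 ihi =>
    intro Γ Δ φ ψ hS
    rw [Prod.mk.injEq] at hS
    obtain ⟨h1, h2⟩ := hS
    have hmem : FormM.imp φ ψ ∈ Δb := by
      have : FormM.imp φ ψ ∈ Δb + Γb.map FormM.box := by
        rw [h1]; simp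
      rcases Multiset.mem_add.mp this with h | h
      · exact h
      · obtain ⟨a, _, ha⟩ := Multiset.mem_map.mp h
        exact absurd ha (by simp)
    obtain ⟨Δb', hΔb⟩ := Multiset.exists_cons_of_mem hmem
    have hΓ : Γ = Δb' + Γb.map FormM.box := by
      have : Γ + {FormM.imp φ ψ} = (Δb' + Γb.map FormM.box) + {FormM.imp φ ψ} := by
        rw [← h1, hΔb, ← Multiset.singleton_add]; abel
      exact add_right_cancel this
    have hbox : GKAmR ((Δb' + {ψ} + {φ}) + Γb.map FormM.box,
        (∑ i : Fin n, ({FormM.box (φs i)} : Multiset FormM)) + (Δb' + {ψ} + {φ})) :=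
      GKAmR.boxkn k hk Γ₀ Γs φs hsplit h0 hi
    have h3 : GKAmR ((Γ + {ψ}) + {φ},
        {ψ} + ({φ} + ((∑ i : Fin n, ({FormM.box (φs i)} : Multiset FormM)) + Δb'))) :=
      hbox.cast (by rw [hΓ]; abel) (by abel)
    exact (GKAmR.impR h3).cast rfl (by
      rw [← h2, hΔb, ← Multiset.singleton_add]; abel)

lemma invR : ∀ {S}, GKAmR S → ∀ (Γ Δ : Multiset FormM) (φ ψ : FormM),
    S = (Γ, {FormM.imp φ ψ} + Δ) → GKAmR (Γ + {φ}, {ψ} + Δ) := by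
  intro S h
  induction h with
  | id Δ0 =>
    intro Γ Δ φ ψ hS
    rw [Prod.mk.injEq] at hS
    obtain ⟨h1, h2⟩ := hS
    subst h1
    have : GKAmR ((Δ + {φ}) + {ψ}, {φ} + ({ψ} + Δ)) :=
      (GKAmR.id (Δ + {φ} + {ψ})).cast rfl (by abel)
    have := GKAmR.impL this
    exact this.cast (by rw [h2]; abel) rfl
  | @impL Γ₁ Δ₁ α β h' ih =>
    intro Γ Δ φ ψ hS
    rw [Prod.mk.injEq] at hS
    obtain ⟨h1, h2⟩ := hS
    subst h1
    have h'' := ih (Γ₁ + {β}) ({α} + Δ) φ ψ (by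
      rw [Prod.mk.injEq]; exact ⟨rfl, by rw [h2]; abel⟩)
    have h3 : GKAmR ((Γ₁ + {φ}) + {β}, {α} + ({ψ} + Δ)) :=
      h''.cast (by abel) (by abel)
    exact (GKAmR.impL h3).cast (by abel) rfl
  | @impR Γ₁ Δ₁ α β h' ih =>
    intro Γ Δ φ ψ hS
    rw [Prod.mk.injEq] at hS
    obtain ⟨h1, h2⟩ := hS
    subst h1
    rw [show ({FormM.imp α β} : Multiset FormM) + Δ₁ = FormM.imp α β ::ₘ Δ₁ by
          rw [Multiset.singleton_add],
        show ({FormM.imp φ ψ} : Multiset FormM) + Δ = FormM.imp φ ψ ::ₘ Δ by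
          rw [Multiset.singleton_add]] at h2
    rcases Multiset.cons_eq_cons.mp h2 with ⟨he, hΔ⟩ | ⟨_, cs, hΔ₁, hΔ⟩
    · injection he with hφ hψ
      subst hφ; subst hψ; subst hΔ
      exact h'
    · have h'' := ih (Γ₁ + {α}) ({β} + cs) φ ψ (by
        rw [Prod.mk.injEq]
        refine ⟨rfl, ?_⟩
        rw [hΔ₁, ← Multiset.singleton_add]; abel)
      have h3 : GKAmR ((Γ₁ + {φ}) + {α}, {β} + ({ψ} + cs)) :=
        h''.cast (by abel) (by abel)
      exact (GKAmR.impR h3).cast rfl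
        (by rw [hΔ, ← Multiset.singleton_add]; abel)
  | @boxkn Γb Δb n k hk Γ₀ Γs φs hsplit h0 hi ih0 ihi =>
    intro Γ Δ φ ψ hS
    rw [Prod.mk.injEq] at hS
    obtain ⟨h1, h2⟩ := hS
    have hmem : FormM.imp φ ψ ∈ Δb := by
      have : FormM.imp φ ψ ∈ (∑ i : Fin n, ({FormM.box (φs i)} : Multiset FormM)) + Δb := by
        rw [h2]; simp
      rcases Multiset.mem_add.mp this with h | h
      · exfalso
        rw [Multiset.mem_sum] at h
        obtain ⟨i, _, hx⟩ := h
        simp at hx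
      · exact h
    obtain ⟨Δb', hΔb⟩ := Multiset.exists_cons_of_mem hmem
    have hΔ : Δ = (∑ i : Fin n, ({FormM.box (φs i)} : Multiset FormM)) + Δb' := by
      have : {FormM.imp φ ψ} + Δ =
          {FormM.imp φ ψ} + ((∑ i : Fin n, ({FormM.box (φs i)} : Multiset FormM)) + Δb') := by
        rw [← h2, hΔb, ← Multiset.singleton_add]; abel
      exact add_left_cancel this
    have hbox : GKAmR ((Δb' + {φ} + {ψ}) + Γb.map FormM.box,
        (∑ i : Fin n, ({FormM.box (φs i)} : Multiset FormM)) + (Δb' + {φ} + {ψ})) :=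
      GKAmR.boxkn k hk Γ₀ Γs φs hsplit h0 hi
    have h3 : GKAmR ((Δb' + Γb.map FormM.box + {φ}) + {ψ},
        {φ} + ({ψ} + ((∑ i : Fin n, ({FormM.box (φs i)} : Multiset FormM)) + Δb'))) :=
      hbox.cast (by abel) (by abel)
    exact (GKAmR.impL h3).cast
      (by rw [← h1, hΔb, ← Multiset.singleton_add]; abel)
      (by rw [hΔ])

/-- The rules (→⇒) and (⇒→) are GK(A_m)^r-invertible; in fact, for
every m ∈ ℕ, if Γ, m[φ→ψ] ⇒ Δ is GK(A_m)^r-derivable then so is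
Γ, m[ψ] ⇒ m[φ], Δ, and if Γ ⇒ m[φ→ψ], Δ is GK(A_m)^r-derivable then so is
Γ, m[φ] ⇒ m[ψ], Δ. -/
theorem stmt_8 :
    (∀ (Γ Δ : Multiset FormM) (φ ψ : FormM),
      GKAmR (Γ + {FormM.imp φ ψ}, Δ) → GKAmR (Γ + {ψ}, {φ} + Δ)) ∧
    (∀ (Γ Δ : Multiset FormM) (φ ψ : FormM),
      GKAmR (Γ, {FormM.imp φ ψ} + Δ) → GKAmR (Γ + {φ}, {ψ} + Δ)) ∧
    (∀ (m : ℕ) (Γ Δ : Multiset FormM) (φ ψ : FormM),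
      GKAmR (Γ + m • ({FormM.imp φ ψ} : Multiset FormM), Δ) →
      GKAmR (Γ + m • ({ψ} : Multiset FormM), m • ({φ} : Multiset FormM) + Δ)) ∧
    (∀ (m : ℕ) (Γ Δ : Multiset FormM) (φ ψ : FormM),
      GKAmR (Γ, m • ({FormM.imp φ ψ} : Multiset FormM) + Δ) →
      GKAmR (Γ + m • ({φ} : Multiset FormM), m • ({ψ} : Multiset FormM) + Δ)) := by
  
  refine ⟨fun Γ Δ φ ψ h => invL h Γ Δ φ ψ rfl,
          fun Γ Δ φ ψ h => invR h Γ Δ φ ψ rfl, ?_, ?_⟩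
  · intro m
    induction m with
    | zero => intro Γ Δ φ ψ h; simpa using h
    | succ m ih =>
      intro Γ Δ φ ψ h
      have h1 : GKAmR ((Γ + m • ({FormM.imp φ ψ} : Multiset FormM)) + {FormM.imp φ ψ}, Δ) :=
        h.cast (by rw [succ_nsmul]; abel) rfl
      have h2 := invL h1 _ Δ φ ψ rfl
      have h3 : GKAmR ((Γ + {ψ}) + m • ({FormM.imp φ ψ} : Multiset FormM), {φ} + Δ) :=
        h2.cast (by abel) rfl
      have h4 := ih (Γ + {ψ}) ({φ} + Δ) φ ψ h3
      exact h4.cast (by rw [succ_nsmul]; abel) (by rw [succ_nsmul]; abel)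
  · intro m
    induction m with
    | zero => intro Γ Δ φ ψ h; simpa using h
    | succ m ih =>
      intro Γ Δ φ ψ h
      have h1 : GKAmR (Γ, {FormM.imp φ ψ} + (m • ({FormM.imp φ ψ} : Multiset FormM) + Δ)) :=
        h.cast rfl (by rw [succ_nsmul]; abel)
      have h2 := invR h1 Γ _ φ ψ rfl
      have h3 : GKAmR ((Γ + {φ}), m • ({FormM.imp φ ψ} : Multiset FormM) + ({ψ} + Δ)) :=
        h2.cast rfl (by abel)
      have h4 := ih (Γ + {φ}) ({ψ} + Δ) φ ψ h3
      exact h4.cast (by rw [succ_nsmul]; abel) (by rw [succ_nsmul]; abel)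
end

section
/- The rule (MIX) is GK(A_m)^r-admissible; in fact, if Γ ⇒ Δ and Π ⇒ Σ are GK(A_m)^r-derivable, then rΓ, sΠ ⇒ sΣ, rΔ is GK(A_m)^r-derivable for all r, s ∈ ℕ. -/
section Aux

open Multiset

lemma gk_cast {A B A' B' : Multiset FormM} (h : GKAmR (A, B)) (hA : A = A')
    (hB : B = B') : GKAmR (A', B') := hA ▸ hB ▸ h

lemma multiset_map_nsmul (f : FormM → FormM) (n : ℕ) (s : Multiset FormM) :
    (n • s).map f = n • s.map f := by
  induction n with
  | zero => simp
  | succ n ih => simp [succ_nsmul, ih]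

lemma sum_const_fin (m : ℕ) (c : Multiset FormM) :
    (∑ _ : Fin m, c) = m • c := by simp

/-- General-index version of the box rule. -/
lemma gk_boxkn' {ι : Type} [Fintype ι] {Γ Δ : Multiset FormM} (k : ℕ) (hk : 1 ≤ k)
    (Γ₀ : Multiset FormM) (Γs : ι → Multiset FormM) (φs : ι → FormM)
    (hsplit : k • Γ = Γ₀ + ∑ i, Γs i)
    (h0 : GKAmR (Γ₀, (0 : Multiset FormM)))
    (hi : ∀ i, GKAmR (Γs i, k • ({φs i} : Multiset FormM))) :
    GKAmR (Δ + Γ.map FormM.box,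
      (∑ i, ({FormM.box (φs i)} : Multiset FormM)) + Δ) := by
  have e := Fintype.equivFin ι
  have hs1 : (∑ j : Fin (Fintype.card ι), Γs (e.symm j)) = ∑ i, Γs i :=
    Equiv.sum_comp e.symm Γs
  have hs2 : (∑ j : Fin (Fintype.card ι), ({FormM.box (φs (e.symm j))} : Multiset FormM))
      = ∑ i, ({FormM.box (φs i)} : Multiset FormM) :=
    Equiv.sum_comp e.symm (fun i => ({FormM.box (φs i)} : Multiset FormM))
  have := GKAmR.boxkn (Γ := Γ) (Δ := Δ) k hk Γ₀ (fun j => Γs (e.symm j))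
    (fun j => φs (e.symm j)) (by rw [hs1]; exact hsplit) h0 (fun j => hi _)
  rwa [hs2] at this

lemma gk_manyImpL (φ ψ : FormM) : ∀ (r : ℕ) (X Y : Multiset FormM),
    GKAmR (X + r • ({ψ} : Multiset FormM), r • ({φ} : Multiset FormM) + Y) →
    GKAmR (X + r • ({FormM.imp φ ψ} : Multiset FormM), Y) := by
  intro r
  induction r with
  | zero => intro X Y h; simpa using h
  | succ r ih =>
      intro X Y h
      have h1 : GKAmR ((X + r • ({ψ} : Multiset FormM)) + {ψ},
          {φ} + (r • ({φ} : Multiset FormM) + Y)) :=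
        gk_cast h (by rw [succ_nsmul]; abel) (by rw [succ_nsmul]; abel)
      have h2 := GKAmR.impL h1
      have h3 : GKAmR ((X + {FormM.imp φ ψ}) + r • ({ψ} : Multiset FormM),
          r • ({φ} : Multiset FormM) + Y) := gk_cast h2 (by abel) rfl
      exact gk_cast (ih _ _ h3) (by rw [succ_nsmul]; abel) rfl

lemma gk_manyImpR (φ ψ : FormM) : ∀ (r : ℕ) (X Y : Multiset FormM),
    GKAmR (X + r • ({φ} : Multiset FormM), r • ({ψ} : Multiset FormM) + Y) →
    GKAmR (X, r • ({FormM.imp φ ψ} : Multiset FormM) + Y) := by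
  intro r
  induction r with
  | zero => intro X Y h; simpa using h
  | succ r ih =>
      intro X Y h
      have h1 : GKAmR ((X + r • ({φ} : Multiset FormM)) + {φ},
          {ψ} + (r • ({ψ} : Multiset FormM) + Y)) :=
        gk_cast h (by rw [succ_nsmul]; abel) (by rw [succ_nsmul]; abel)
      have h2 := GKAmR.impR h1
      have h3 : GKAmR (X + r • ({φ} : Multiset FormM),
          r • ({ψ} : Multiset FormM) + ({FormM.imp φ ψ} + Y)) :=
        gk_cast h2 rfl (by abel)
      exact gk_cast (ih _ _ h3) rfl (by rw [succ_nsmul]; abel)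

/-- Weakening by the same multiset on both sides. -/
lemma gk_weak {S : SeqM} (h : GKAmR S) :
    ∀ W : Multiset FormM, GKAmR (S.1 + W, S.2 + W) := by
  induction h with
  | id Δ => exact fun W => GKAmR.id (Δ + W)
  | @impL Γ Δ φ ψ prem ih =>
      intro W
      have h3 : GKAmR ((Γ + W) + {ψ}, {φ} + (Δ + W)) :=
        gk_cast (ih W) (by dsimp only; abel) (by dsimp only; abel)
      exact gk_cast (GKAmR.impL h3) (by dsimp only; abel) rfl
  | @impR Γ Δ φ ψ prem ih =>
      intro W
      have h3 : GKAmR ((Γ + W) + {φ}, {ψ} + (Δ + W)) :=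
        gk_cast (ih W) (by dsimp only; abel) (by dsimp only; abel)
      exact gk_cast (GKAmR.impR h3) rfl (by dsimp only; abel)
  | @boxkn Γ Δ n k hk Γ₀ Γs φs hsplit h0 hi ih0 ihi =>
      intro W
      have := GKAmR.boxkn (Γ := Γ) (Δ := Δ + W) k hk Γ₀ Γs φs hsplit h0 hi
      exact gk_cast this (by dsimp only; abel) (by dsimp only; abel)

/-- Multiplication of a derivable sequent. -/
lemma gk_mult {S : SeqM} (h : GKAmR S) : ∀ m : ℕ, GKAmR (m • S.1, m • S.2) := by
  induction h with
  | id Δ => exact fun m => GKAmR.id (m • Δ)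
  | @impL Γ Δ φ ψ prem ih =>
      intro m
      have h3 : GKAmR ((m • Γ) + m • ({ψ} : Multiset FormM),
          m • ({φ} : Multiset FormM) + m • Δ) :=
        gk_cast (ih m) (by rw [smul_add]) (by rw [smul_add])
      exact gk_cast (gk_manyImpL φ ψ m _ _ h3) (by rw [smul_add]) rfl
  | @impR Γ Δ φ ψ prem ih =>
      intro m
      have h3 : GKAmR ((m • Γ) + m • ({φ} : Multiset FormM),
          m • ({ψ} : Multiset FormM) + m • Δ) :=
        gk_cast (ih m) (by rw [smul_add]) (by rw [smul_add])
      exact gk_cast (gk_manyImpR φ ψ m _ _ h3) rfl (by rw [smul_add])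
  | @boxkn Γ Δ n k hk Γ₀ Γs φs hsplit h0 hi ih0 ihi =>
      intro m
      have key := gk_boxkn' (ι := Fin m × Fin n) (Γ := m • Γ) (Δ := m • Δ) k hk
        (m • Γ₀) (fun p => Γs p.2) (fun p => φs p.2)
        (by
          have : (∑ p : Fin m × Fin n, Γs p.2) = m • ∑ i, Γs i := by
            rw [Fintype.sum_prod_type]
            simp [← Finset.smul_sum]
          rw [this, smul_comm, hsplit, smul_add])
        (by simpa using ih0 m)
        (fun p => hi p.2)
      have hmap : (m • Γ).map FormM.box = m • Γ.map FormM.box :=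
        multiset_map_nsmul _ _ _
      have hsum : (∑ p : Fin m × Fin n, ({FormM.box (φs p.2)} : Multiset FormM))
          = m • ∑ i : Fin n, ({FormM.box (φs i)} : Multiset FormM) := by
        rw [Fintype.sum_prod_type]
        simp [← Finset.smul_sum]
      exact gk_cast key (by rw [hmap, ← smul_add]) (by rw [hsum, ← smul_add])

lemma gk_mult' {A B : Multiset FormM} (h : GKAmR (A, B)) (m : ℕ) :
    GKAmR (m • A, m • B) := gk_mult h m

lemma gk_mix : ∀ {S : SeqM}, GKAmR S → ∀ {T : SeqM}, GKAmR T → ∀ r s : ℕ,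
    GKAmR (r • S.1 + s • T.1, s • T.2 + r • S.2) := by
  intro S h1
  induction h1 with
  | id Δ =>
      intro T h2 r s
      have := gk_weak (gk_mult' h2 s) (r • Δ)
      exact gk_cast this (by abel) rfl
  | @impL Γ Δ φ ψ prem ih =>
      intro T h2 r s
      have h3 : GKAmR ((r • Γ + s • T.1) + r • ({ψ} : Multiset FormM),
          r • ({φ} : Multiset FormM) + (s • T.2 + r • Δ)) :=
        gk_cast (ih h2 r s) (by simp only [smul_add]; abel) (by simp only [smul_add]; abel)
      exact gk_cast (gk_manyImpL φ ψ r _ _ h3) (by simp only [smul_add]; abel) rfl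
  | @impR Γ Δ φ ψ prem ih =>
      intro T h2 r s
      have h3 : GKAmR ((r • Γ + s • T.1) + r • ({φ} : Multiset FormM),
          r • ({ψ} : Multiset FormM) + (s • T.2 + r • Δ)) :=
        gk_cast (ih h2 r s) (by simp only [smul_add]; abel) (by simp only [smul_add]; abel)
      exact gk_cast (gk_manyImpR φ ψ r _ _ h3) rfl (by simp only [smul_add]; abel)
  | @boxkn Γ Δ n k hk Γ₀ Γs φs hsplit h0 hi ih0 ihi =>
      intro T h2
      induction h2 with
      | id W =>
          intro r s
          have d1 : GKAmR (Δ + Γ.map FormM.box,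
              (∑ i : Fin n, ({FormM.box (φs i)} : Multiset FormM)) + Δ) :=
            GKAmR.boxkn k hk Γ₀ Γs φs hsplit h0 hi
          have := gk_weak (gk_mult' d1 r) (s • W)
          exact gk_cast this (by abel) (by abel)
      | @impL Θ Λ φ ψ prem ihp =>
          intro r s
          have h3 : GKAmR ((r • (Δ + Γ.map FormM.box) + s • Θ) + s • ({ψ} : Multiset FormM),
              s • ({φ} : Multiset FormM) +
                (s • Λ + r • ((∑ i : Fin n, ({FormM.box (φs i)} : Multiset FormM)) + Δ))) :=
            gk_cast (ihp r s) (by simp only [smul_add]; abel) (by simp only [smul_add]; abel)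
          exact gk_cast (gk_manyImpL φ ψ s _ _ h3) (by simp only [smul_add]; abel) rfl
      | @impR Θ Λ φ ψ prem ihp =>
          intro r s
          have h3 : GKAmR ((r • (Δ + Γ.map FormM.box) + s • Θ) + s • ({φ} : Multiset FormM),
              s • ({ψ} : Multiset FormM) +
                (s • Λ + r • ((∑ i : Fin n, ({FormM.box (φs i)} : Multiset FormM)) + Δ))) :=
            gk_cast (ihp r s) (by simp only [smul_add]; abel) (by simp only [smul_add]; abel)
          exact gk_cast (gk_manyImpR φ ψ s _ _ h3) rfl (by simp only [smul_add]; abel)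
      | @boxkn Γ₂ Δ₂ n₂ k₂ hk₂ Γ₀₂ Γs₂ φs₂ hsplit₂ h02 hi2 ih02 ihi2 =>
          intro r s
          have h0' : GKAmR ((r * k₂) • Γ₀ + (s * k) • Γ₀₂, (0 : Multiset FormM)) := by
            have := ih0 h02 (r * k₂) (s * k)
            simpa using this
          have key := gk_boxkn'
            (ι := (Fin r × Fin n) ⊕ (Fin s × Fin n₂))
            (Γ := r • Γ + s • Γ₂) (Δ := r • Δ + s • Δ₂) (k * k₂)
            (Nat.one_le_iff_ne_zero.mpr (by positivity))
            ((r * k₂) • Γ₀ + (s * k) • Γ₀₂)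
            (Sum.elim (fun p => k₂ • Γs p.2) (fun q => k • Γs₂ q.2))
            (Sum.elim (fun p => φs p.2) (fun q => φs₂ q.2))
            (by
              rw [Fintype.sum_sum_type]
              simp only [Sum.elim_inl, Sum.elim_inr]
              rw [Fintype.sum_prod_type, Fintype.sum_prod_type]
              simp only [← Finset.smul_sum, Finset.sum_const, Finset.card_univ,
                Fintype.card_fin]
              have e1 : (k * k₂) • (r • Γ) = (r * k₂) • (k • Γ) := by module
              have e2 : (k * k₂) • (s • Γ₂) = (s * k) • (k₂ • Γ₂) := by module
              rw [smul_add, e1, e2, hsplit, hsplit₂]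
              module)
            h0'
            (by
              rintro (⟨a, i⟩ | ⟨b, j⟩) <;>
                simp only [Sum.elim_inl, Sum.elim_inr]
              · have := gk_mult' (hi i) k₂
                exact gk_cast this rfl (by module)
              · have := gk_mult' (hi2 j) k
                exact gk_cast this rfl (by module))
          have hmap : (r • Γ + s • Γ₂).map FormM.box
              = r • Γ.map FormM.box + s • Γ₂.map FormM.box := by
            rw [Multiset.map_add, multiset_map_nsmul, multiset_map_nsmul]
          have hsum : (∑ x : (Fin r × Fin n) ⊕ (Fin s × Fin n₂),
                ({FormM.box (Sum.elim (fun p => φs p.2) (fun q => φs₂ q.2) x)} : Multiset FormM))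
              = r • (∑ i : Fin n, ({FormM.box (φs i)} : Multiset FormM)) +
                s • (∑ j : Fin n₂, ({FormM.box (φs₂ j)} : Multiset FormM)) := by
            rw [Fintype.sum_sum_type]
            simp only [Sum.elim_inl, Sum.elim_inr]
            rw [Fintype.sum_prod_type, Fintype.sum_prod_type]
            simp
          refine gk_cast key ?_ ?_
          · rw [hmap, smul_add, smul_add]; abel
          · rw [hsum, smul_add, smul_add]; abel

end Aux

/-- The rule (MIX) is GK(A_m)^r-admissible; in fact, if Γ ⇒ Δ and
Θ ⇒ Λ are GK(A_m)^r-derivable, then rΓ, sΘ ⇒ sΛ, rΔ is GK(A_m)^r-derivable for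
all r, s ∈ ℕ. -/
theorem stmt_9 (Γ Δ Θ Λ : Multiset FormM)
    (h1 : GKAmR (Γ, Δ)) (h2 : GKAmR (Θ, Λ)) (r s : ℕ) :
    GKAmR (r • Γ + s • Θ, s • Λ + r • Δ) := by
  exact gk_mix h1 h2 r s
end

section
/- The cancellation rule is GK(A_m)^r-admissible: for every ℒ_Am□-formula φ and finite multisets Γ, Δ of ℒ_Am□-formulas, if Γ, φ ⇒ φ, Δ is GK(A_m)^r-derivable, then Γ ⇒ Δ is GK(A_m)^r-derivable. -/
namespace Cancel11

open Multiset

abbrev M := Multiset FormM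

/-- Alternative formulation of the calculus with a multiset of premise-pairs. -/
inductive GKA : SeqM → Prop
  | id (Δ : M) : GKA (Δ, Δ)
  | impL {Γ Δ : M} {φ ψ : FormM} :
      GKA (Γ + {ψ}, {φ} + Δ) → GKA (Γ + {FormM.imp φ ψ}, Δ)
  | impR {Γ Δ : M} {φ ψ : FormM} :
      GKA (Γ + {φ}, {ψ} + Δ) → GKA (Γ, {FormM.imp φ ψ} + Δ)
  | boxS {Γ Δ : M} (k : ℕ) (hk : 1 ≤ k) (Γ₀ : M) (S : Multiset (M × FormM))
      (hsplit : k • Γ = Γ₀ + (S.map Prod.fst).sum)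
      (h0 : GKA (Γ₀, 0))
      (hS : ∀ p ∈ S, GKA (p.1, k • ({p.2} : M))) :
      GKA (Δ + Γ.map FormM.box, S.map (fun p => FormM.box p.2) + Δ)

lemma pcast {P : SeqM → Prop} {a b a' b' : M} (h : P (a, b)) (ha : a = a')
    (hb : b = b') : P (a', b') := ha ▸ hb ▸ h

lemma gcast {a b a' b' : M} (h : GKA (a, b)) (ha : a = a') (hb : b = b') :
    GKA (a', b') := ha ▸ hb ▸ h

lemma sum_singletons {n : ℕ} (f : Fin n → FormM) :
    (∑ i : Fin n, ({f i} : M)) = (Finset.univ.val.map f) := by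
  rw [Finset.sum_eq_multiset_sum]
  rw [show (Multiset.map (fun i => ({f i} : M)) Finset.univ.val)
      = ((Finset.univ.val.map f).map fun a => ({a} : M)) by rw [Multiset.map_map]; rfl]
  exact Multiset.sum_map_singleton _

lemma list_sum_get {α β : Type*} [AddCommMonoid β] (L : List α) (g : α → β) :
    ∑ i : Fin L.length, g (L.get i) = (L.map g).sum := by
  conv_rhs => rw [← List.ofFn_get L]
  rw [List.map_ofFn, List.sum_ofFn]
  rfl

lemma gka_of_gkamr {s : SeqM} (h : GKAmR s) : GKA s := by
  induction h with
  | id Δ => exact GKA.id Δ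
  | impL _ ih => exact GKA.impL ih
  | impR _ ih => exact GKA.impR ih
  | @boxkn Γ Δ n k hk Γ₀ Γs φs hsplit h0 hi ih0 ihi =>
    have := GKA.boxS (Γ := Γ) (Δ := Δ) k hk Γ₀
      (Finset.univ.val.map (fun i => (Γs i, φs i)))
      (by rw [Multiset.map_map]
          rw [show ((Prod.fst ∘ fun i => (Γs i, φs i)) : Fin n → M) = Γs from rfl]
          rw [hsplit, Finset.sum_eq_multiset_sum])
      ih0
      (by intro p hp
          rw [Multiset.mem_map] at hp
          obtain ⟨i, _, rfl⟩ := hp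
          exact ihi i)
    refine gcast this rfl ?_
    congr 1
    rw [Multiset.map_map, sum_singletons]
    rfl

lemma gkamr_of_gka {s : SeqM} (h : GKA s) : GKAmR s := by
  induction h with
  | id Δ => exact GKAmR.id Δ
  | impL _ ih => exact GKAmR.impL ih
  | impR _ ih => exact GKAmR.impR ih
  | @boxS Γ Δ k hk Γ₀ S hsplit h0 hS ih0 ihS =>
    classical
    set L := S.toList with hL
    have hcoe : (L : Multiset (M × FormM)) = S := Multiset.coe_toList S
    have key : ∀ (g : M × FormM → M),
        (∑ i : Fin L.length, g (L.get i)) = (S.map g).sum := by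
      intro g
      rw [list_sum_get, ← hcoe, Multiset.map_coe, Multiset.sum_coe]
    have := GKAmR.boxkn (Γ := Γ) (Δ := Δ) (n := L.length) k hk Γ₀
      (fun i => (L.get i).1) (fun i => (L.get i).2)
      (by rw [hsplit, key Prod.fst])
      ih0
      (by intro i
          refine ihS _ ?_
          rw [← hcoe, Multiset.mem_coe]
          exact List.get_mem L i)
    refine pcast this rfl ?_
    congr 1
    rw [show (∑ i : Fin L.length, ({FormM.box (L.get i).2} : M))
        = (S.map (fun p => ({FormM.box p.2} : M))).sum from
      key (fun p => ({FormM.box p.2} : M))]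
    rw [show (S.map (fun p => ({FormM.box p.2} : M)))
        = ((S.map (fun p => FormM.box p.2)).map (fun a => ({a} : M))) by
      rw [Multiset.map_map]; rfl]
    exact Multiset.sum_map_singleton _


lemma msum_nsmul {β : Type*} [AddCommMonoid β] (n : ℕ) (s : Multiset β) :
    (n • s).sum = n • s.sum := by
  induction n with
  | zero => simp
  | succ n ih => rw [succ_nsmul, succ_nsmul, Multiset.sum_add, ih]

/-- Adding the same multiset to both sides preserves derivability. -/
lemma ctxWeak (Θ : M) {s : SeqM} (h : GKA s) : GKA (Θ + s.1, Θ + s.2) := by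
  induction h with
  | id Δ => exact GKA.id (Θ + Δ)
  | @impL Γ Δ φ ψ h ih =>
    refine pcast (GKA.impL (Γ := Θ + Γ) (Δ := Θ + Δ) (φ := φ) (ψ := ψ)
      (pcast ih ?_ ?_)) ?_ ?_ <;> abel
  | @impR Γ Δ φ ψ h ih =>
    refine pcast (GKA.impR (Γ := Θ + Γ) (Δ := Θ + Δ) (φ := φ) (ψ := ψ)
      (pcast ih ?_ ?_)) ?_ ?_ <;> module
  | @boxS Γ Δ k hk Γ₀ S hsplit h0 hS ih0 ihS =>
    refine pcast (GKA.boxS (Γ := Γ) (Δ := Θ + Δ) k hk Γ₀ S hsplit h0 hS) ?_ ?_ <;> module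

/-- `m`-fold application of (→⇒). -/
lemma impLN (m : ℕ) {X Y : M} {φ ψ : FormM}
    (h : GKA (X + m • ({ψ} : M), m • ({φ} : M) + Y)) :
    GKA (X + m • ({FormM.imp φ ψ} : M), Y) := by
  induction m generalizing X with
  | zero => simpa using h
  | succ n ih =>
    have h1 : GKA ((X + n • ({ψ} : M)) + {ψ}, {φ} + (n • ({φ} : M) + Y)) :=
      pcast h (by simp only [succ_nsmul]; abel) (by simp only [succ_nsmul]; abel)
    have h2 := GKA.impL h1
    have h3 := ih (X := X + {FormM.imp φ ψ})
      (pcast h2 (by abel) rfl)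
    exact pcast h3 (by simp only [succ_nsmul]; abel) rfl

/-- `m`-fold application of (⇒→). -/
lemma impRN (m : ℕ) {X Y : M} {φ ψ : FormM}
    (h : GKA (X + m • ({φ} : M), m • ({ψ} : M) + Y)) :
    GKA (X, m • ({FormM.imp φ ψ} : M) + Y) := by
  induction m generalizing Y with
  | zero => simpa using h
  | succ n ih =>
    have h1 : GKA ((X + n • ({φ} : M)) + {φ}, {ψ} + (n • ({ψ} : M) + Y)) :=
      pcast h (by simp only [succ_nsmul]; abel) (by simp only [succ_nsmul]; abel)
    have h2 := GKA.impR h1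
    have h3 := ih (Y := {FormM.imp φ ψ} + Y)
      (pcast h2 rfl (by abel))
    exact pcast h3 rfl (by simp only [succ_nsmul]; abel)

/-- Scaling: `m` copies of a derivable sequent (componentwise) is derivable. -/
lemma scale {s : SeqM} (h : GKA s) : ∀ m : ℕ, GKA (m • s.1, m • s.2) := by
  induction h with
  | id Δ => exact fun m => GKA.id (m • Δ)
  | @impL Γ Δ φ ψ h ih =>
    intro m
    have hih : GKA (m • Γ + m • ({ψ} : M), m • ({φ} : M) + m • Δ) :=
      pcast (ih m) (by simp only [smul_add]) (by simp only [smul_add])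
    exact pcast (impLN m hih) (by simp only [smul_add]) rfl
  | @impR Γ Δ φ ψ h ih =>
    intro m
    have hih : GKA (m • Γ + m • ({φ} : M), m • ({ψ} : M) + m • Δ) :=
      pcast (ih m) (by simp only [smul_add]) (by simp only [smul_add])
    exact pcast (impRN m hih) rfl (by simp only [smul_add])
  | @boxS Γ Δ k hk Γ₀ S hsplit h0 hS ih0 ihS =>
    intro m
    rcases Nat.eq_zero_or_pos m with rfl | hm
    · exact pcast (GKA.id 0) (by simp) (by simp)
    · refine pcast (GKA.boxS (Γ := m • Γ) (Δ := m • Δ) k hk (m • Γ₀) (m • S)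
        ?_ ?_ ?_) ?_ ?_
      · rw [Multiset.map_nsmul, msum_nsmul, smul_comm, hsplit, smul_add]
      · exact pcast (ih0 m) rfl (by simp)
      · intro p hp
        exact hS p ((Multiset.mem_nsmul.mp hp).2)
      · rw [Multiset.map_nsmul, smul_add]
      · rw [Multiset.map_nsmul, smul_add]

lemma sum_map_smul {α : Type*} (S : Multiset α) (f : α → M) (n : ℕ) :
    (S.map (fun p => n • f p)).sum = n • (S.map f).sum :=
  Multiset.sum_map_nsmul

/-- Mix (with multiplicity on the second premise) is admissible. -/
lemma mixN {s2 : SeqM} (h2 : GKA s2) :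
    ∀ (m : ℕ) {s1 : SeqM}, GKA s1 → GKA (s1.1 + m • s2.1, s1.2 + m • s2.2) := by
  induction h2 with
  | id Θ =>
    intro m s1 h1
    exact pcast (ctxWeak (m • Θ) h1) (by module) (by module)
  | @impL Γ Δ φ ψ h ih =>
    intro m s1 h1
    have h3 : GKA ((s1.1 + m • Γ) + m • ({ψ} : M), m • ({φ} : M) + (s1.2 + m • Δ)) :=
      pcast (ih m h1) (by simp only [smul_add]; module) (by simp only [smul_add]; module)
    exact pcast (impLN m h3) (by simp only [smul_add]; module) rfl
  | @impR Γ Δ φ ψ h ih =>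
    intro m s1 h1
    have h3 : GKA ((s1.1 + m • Γ) + m • ({φ} : M), m • ({ψ} : M) + (s1.2 + m • Δ)) :=
      pcast (ih m h1) (by simp only [smul_add]; module) (by simp only [smul_add]; module)
    exact pcast (impRN m h3) rfl (by simp only [smul_add]; module)
  | @boxS Γ₂ Δ₂ k₂ hk₂ Γ₀₂ S₂ hsplit₂ h0₂ hS₂ ih0₂ ihS₂ =>
    intro m s1 h1
    have d2 : GKA (Δ₂ + Γ₂.map FormM.box, S₂.map (fun p => FormM.box p.2) + Δ₂) :=
      GKA.boxS k₂ hk₂ Γ₀₂ S₂ hsplit₂ h0₂ hS₂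
    induction h1 with
    | id Θ =>
      have := ctxWeak Θ (scale d2 m)
      exact pcast this rfl rfl
    | @impL Γ Δ φ ψ h ih =>
      have h3 := GKA.impL (Γ := Γ + m • (Δ₂ + Γ₂.map FormM.box))
        (Δ := Δ + m • (S₂.map (fun p => FormM.box p.2) + Δ₂)) (φ := φ) (ψ := ψ)
        (pcast ih (by module) (by module))
      exact pcast h3 (by module) rfl
    | @impR Γ Δ φ ψ h ih =>
      have h3 := GKA.impR (Γ := Γ + m • (Δ₂ + Γ₂.map FormM.box))
        (Δ := Δ + m • (S₂.map (fun p => FormM.box p.2) + Δ₂)) (φ := φ) (ψ := ψ)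
        (pcast ih (by module) (by module))
      exact pcast h3 rfl (by module)
    | @boxS Γ₁ Δ₁ k₁ hk₁ Γ₀₁ S₁ hsplit₁ h0₁ hS₁ ih0₁ ihS₁ =>
      clear ih0₁ ihS₁ ihS₂
      refine pcast (GKA.boxS (Γ := Γ₁ + m • Γ₂)
        (Δ := Δ₁ + m • Δ₂) (k₁ * k₂) (Nat.one_le_iff_ne_zero.mpr
          (by positivity))
        (k₂ • Γ₀₁ + (m * k₁) • Γ₀₂)
        (S₁.map (fun p => (k₂ • p.1, p.2)) + m • (S₂.map (fun p => (k₁ • p.1, p.2))))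
        ?_ ?_ ?_) ?_ ?_
      · -- split
        rw [Multiset.map_add, Multiset.map_nsmul, Multiset.map_map, Multiset.map_map]
        rw [show ((Prod.fst ∘ fun p : M × FormM => (k₂ • p.1, p.2)) : M × FormM → M)
            = fun p => k₂ • p.1 from rfl]
        rw [show ((Prod.fst ∘ fun p : M × FormM => (k₁ • p.1, p.2)) : M × FormM → M)
            = fun p => k₁ • p.1 from rfl]
        rw [Multiset.sum_add, msum_nsmul, sum_map_smul, sum_map_smul]
        have e1 : k₂ • (k₁ • Γ₁) = k₂ • Γ₀₁ + k₂ • (S₁.map Prod.fst).sum := by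
          rw [hsplit₁, smul_add]
        have e2 : k₁ • (k₂ • Γ₂) = k₁ • Γ₀₂ + k₁ • (S₂.map Prod.fst).sum := by
          rw [hsplit₂, smul_add]
        calc (k₁ * k₂) • (Γ₁ + m • Γ₂)
            = k₂ • (k₁ • Γ₁) + m • (k₁ • (k₂ • Γ₂)) := by module
          _ = k₂ • Γ₀₁ + (m * k₁) • Γ₀₂ +
              (k₂ • (S₁.map Prod.fst).sum + m • (k₁ • (S₂.map Prod.fst).sum)) := by
              rw [e1, e2]; module
      · -- Γ₀ premise
        have hs1 : GKA (k₂ • Γ₀₁, (0 : M)) :=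
          pcast (scale h0₁ k₂) rfl (by simp)
        exact pcast (ih0₂ (m * k₁) hs1) rfl (by simp)
      · -- S premises
        intro p hp
        rw [Multiset.mem_add] at hp
        rcases hp with hp | hp
        · rw [Multiset.mem_map] at hp
          obtain ⟨q, hq, rfl⟩ := hp
          exact pcast (scale (hS₁ q hq) k₂) rfl (by module)
        · obtain ⟨q, hq, rfl⟩ := Multiset.mem_map.mp (Multiset.mem_nsmul.mp hp).2
          exact pcast (scale (hS₂ q hq) k₁) rfl (by module)
      · -- left side
        rw [Multiset.map_add, Multiset.map_nsmul]; module
      · -- right side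
        rw [Multiset.map_add, Multiset.map_nsmul, Multiset.map_map, Multiset.map_map]
        rw [show (((fun p : M × FormM => FormM.box p.2) ∘ fun p : M × FormM => (k₂ • p.1, p.2)) : M × FormM → FormM)
            = fun p => FormM.box p.2 from rfl]
        rw [show (((fun p : M × FormM => FormM.box p.2) ∘ fun p : M × FormM => (k₁ • p.1, p.2)) : M × FormM → FormM)
            = fun p => FormM.box p.2 from rfl]
        module
lemma seq_eq {a b a' b' : M} (h1 : a = a') (h2 : b = b') :
    ((a, b) : SeqM) = (a', b') := by rw [h1, h2]

/-- Repeated cancellation, given single cancellation for `ψ`. -/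
lemma cancelN {ψ : FormM}
    (hc : ∀ Γ Δ : M, GKA (Γ + {ψ}, {ψ} + Δ) → GKA (Γ, Δ)) :
    ∀ (m : ℕ) (Γ Δ : M), GKA (Γ + m • ({ψ} : M), m • ({ψ} : M) + Δ) → GKA (Γ, Δ) := by
  intro m
  induction m with
  | zero => intro Γ Δ h; simpa using h
  | succ n ih =>
    intro Γ Δ h
    have h1 : GKA ((Γ + n • ({ψ} : M)) + {ψ}, {ψ} + (n • ({ψ} : M) + Δ)) :=
      pcast h (by simp only [succ_nsmul]; module) (by simp only [succ_nsmul]; module)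
    exact ih Γ Δ (hc _ _ h1)

/-- Exchange lemma for multisets with one added element on each side. -/
lemma exch {A B : M} {a b : FormM} (h : A + {a} = B + {b}) :
    (a = b ∧ A = B) ∨ ∃ C, A = C + {b} ∧ B = C + {a} := by
  have h' : a ::ₘ A = b ::ₘ B := by
    rw [← Multiset.singleton_add, ← Multiset.singleton_add, add_comm {a} A,
      add_comm {b} B]; exact h
  rcases Multiset.cons_eq_cons.mp h' with ⟨h1, h2⟩ | ⟨_, cs, h1, h2⟩
  · exact Or.inl ⟨h1, h2⟩
  · exact Or.inr ⟨cs, by rw [h1, ← Multiset.singleton_add, add_comm],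
      by rw [h2, ← Multiset.singleton_add, add_comm]⟩

/-- Invertibility of (→⇒). -/
lemma invL {s : SeqM} (h : GKA s) : ∀ (Γ Δ : M) (α β : FormM),
    s = (Γ + {FormM.imp α β}, Δ) → GKA (Γ + {β}, {α} + Δ) := by
  induction h with
  | id Θ =>
    intro Γ Δ α β heq
    obtain ⟨h1, h2⟩ := Prod.mk.injEq .. ▸ heq
    have h3 := GKA.impR (Γ := Γ + {β}) (Δ := {α} + Γ) (φ := α) (ψ := β)
      (pcast (GKA.id (Γ + {β} + {α})) rfl (by module))
    exact pcast h3 rfl (by rw [← h2, h1]; module)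
  | @impL Γ' Δ' φ ψ h ih =>
    intro Γ Δ α β heq
    obtain ⟨h1, h2⟩ := Prod.mk.injEq .. ▸ heq
    rcases exch h1 with ⟨he, hΓ⟩ | ⟨C, hΓ', hΓ⟩
    · obtain ⟨rfl, rfl⟩ : φ = α ∧ ψ = β := by
        injection he with e1 e2; exact ⟨e1, e2⟩
      exact pcast h (by first | rfl | rw [hΓ]) (by first | rfl | rw [h2])
    · have hih := ih (C + {ψ}) ({φ} + Δ) α β
        (seq_eq (by rw [hΓ']; module) (by rw [h2]))
      have h3 := GKA.impL (Γ := C + {β}) (Δ := {α} + Δ) (φ := φ) (ψ := ψ)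
        (pcast hih (by module) (by module))
      exact pcast h3 (by rw [hΓ]; module) rfl
  | @impR Γ' Δ' φ ψ h ih =>
    intro Γ Δ α β heq
    obtain ⟨h1, h2⟩ := Prod.mk.injEq .. ▸ heq
    have hih := ih (Γ + {φ}) ({ψ} + Δ') α β
      (seq_eq (by rw [h1]; module) rfl)
    have h3 := GKA.impR (Γ := Γ + {β}) (Δ := {α} + Δ') (φ := φ) (ψ := ψ)
      (pcast hih (by module) (by module))
    exact pcast h3 rfl (by rw [← h2]; module)
  | @boxS Γc Δc k hk Γ₀ S hsplit h0 hS ih0 ihS =>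
    clear ih0 ihS
    intro Γ Δ α β heq
    obtain ⟨h1, h2⟩ := Prod.mk.injEq .. ▸ heq
    -- α→β must occur in Δc
    have hmem : FormM.imp α β ∈ Δc := by
      have : FormM.imp α β ∈ Δc + Γc.map FormM.box := by
        rw [h1]; simp
      rcases Multiset.mem_add.mp this with h | h
      · exact h
      · obtain ⟨x, _, hx⟩ := Multiset.mem_map.mp h
        cases hx
    obtain ⟨t, ht0⟩ := Multiset.exists_cons_of_mem hmem
    have ht : Δc = {FormM.imp α β} + t := by rw [Multiset.singleton_add]; exact ht0
    have hΓ : Γ = t + Γc.map FormM.box := by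
      have : Γ + {FormM.imp α β} = (t + Γc.map FormM.box) + {FormM.imp α β} := by
        rw [← h1, ht]; module
      exact add_right_cancel this
    have hbox := GKA.boxS (Γ := Γc) (Δ := t + {α} + {β}) k hk Γ₀ S hsplit h0 hS
    have h3 := GKA.impR (Γ := Γ + {β})
      (Δ := {α} + (S.map (fun p => FormM.box p.2) + t)) (φ := α) (ψ := β)
      (pcast hbox (by rw [hΓ]; module) (by module))
    exact pcast h3 rfl (by rw [← h2, ht]; module)

/-- Invertibility of (⇒→). -/
lemma invR {s : SeqM} (h : GKA s) : ∀ (Γ Δ : M) (α β : FormM),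
    s = (Γ, {FormM.imp α β} + Δ) → GKA (Γ + {α}, {β} + Δ) := by
  induction h with
  | id Θ =>
    intro Γ Δ α β heq
    obtain ⟨h1, h2⟩ := Prod.mk.injEq .. ▸ heq
    have h3 := GKA.impL (Γ := Δ + {α}) (Δ := {β} + Δ) (φ := α) (ψ := β)
      (pcast (GKA.id (Δ + {α} + {β})) rfl (by module))
    exact pcast h3 (by rw [← h1, h2]; module) rfl
  | @impL Γ' Δ' φ ψ h ih =>
    intro Γ Δ α β heq
    obtain ⟨h1, h2⟩ := Prod.mk.injEq .. ▸ heq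
    have hih := ih (Γ' + {ψ}) ({φ} + Δ) α β
      (seq_eq rfl (by rw [h2]; module))
    have h3 := GKA.impL (Γ := Γ' + {α}) (Δ := {β} + Δ) (φ := φ) (ψ := ψ)
      (pcast hih (by module) (by module))
    exact pcast h3 (by rw [← h1]; module) rfl
  | @impR Γ' Δ' φ ψ h ih =>
    intro Γ Δ α β heq
    obtain ⟨h1, h2⟩ := Prod.mk.injEq .. ▸ heq
    have h2' : Δ' + {FormM.imp φ ψ} = Δ + {FormM.imp α β} := by
      rw [show Δ' + {FormM.imp φ ψ} = {FormM.imp φ ψ} + Δ' by module, h2]; module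
    rcases exch h2' with ⟨he, hΔ⟩ | ⟨C, hΔ', hΔ⟩
    · obtain ⟨rfl, rfl⟩ : φ = α ∧ ψ = β := by
        injection he with e1 e2; exact ⟨e1, e2⟩
      exact pcast h (by first | rfl | rw [h1]) (by first | rfl | rw [hΔ])
    · have hih := ih (Γ' + {φ}) ({ψ} + C) α β
        (seq_eq (by rw [h1]) (by rw [hΔ']; module))
      have h3 := GKA.impR (Γ := Γ + {α}) (Δ := {β} + C) (φ := φ) (ψ := ψ)
        (pcast hih (by rw [h1]; module) (by module))
      exact pcast h3 rfl (by rw [hΔ]; module)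
  | @boxS Γc Δc k hk Γ₀ S hsplit h0 hS ih0 ihS =>
    clear ih0 ihS
    intro Γ Δ α β heq
    obtain ⟨h1, h2⟩ := Prod.mk.injEq .. ▸ heq
    have hmem : FormM.imp α β ∈ Δc := by
      have : FormM.imp α β ∈ S.map (fun p => FormM.box p.2) + Δc := by
        rw [h2]; simp
      rcases Multiset.mem_add.mp this with h | h
      · obtain ⟨x, _, hx⟩ := Multiset.mem_map.mp h
        cases hx
      · exact h
    obtain ⟨t, ht0⟩ := Multiset.exists_cons_of_mem hmem
    have ht : Δc = {FormM.imp α β} + t := by rw [Multiset.singleton_add]; exact ht0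
    have hΔ : Δ = S.map (fun p => FormM.box p.2) + t := by
      have : Δ + {FormM.imp α β}
          = (S.map (fun p => FormM.box p.2) + t) + {FormM.imp α β} := by
        have h2' : {FormM.imp α β} + Δ
            = S.map (fun p => FormM.box p.2) + ({FormM.imp α β} + t) := by
          rw [← h2, ht]
        rw [show Δ + {FormM.imp α β} = {FormM.imp α β} + Δ by module, h2']
        module
      exact add_right_cancel this
    have hbox := GKA.boxS (Γ := Γc) (Δ := t + {α} + {β}) k hk Γ₀ S hsplit h0 hS
    have h4 : GKA ((t + {α} + Γc.map FormM.box) + {β},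
        {α} + ({β} + (S.map (fun p => FormM.box p.2) + t))) := by
      refine pcast hbox ?_ ?_ <;> module
    have h3 := GKA.impL h4
    exact pcast h3 (by rw [← h1, ht]; module) (by rw [hΔ])
lemma split2 {A B C : M} (h : C ≤ A + B) :
    ∃ C₁ C₂, C = C₁ + C₂ ∧ C₁ ≤ A ∧ C₂ ≤ B := by
  refine ⟨C ∩ A, C - C ∩ A, ?_, Multiset.inter_le_right, ?_⟩
  · rw [add_tsub_cancel_of_le (Multiset.inter_le_left : C ∩ A ≤ C)]
  · rw [Multiset.le_iff_count]
    intro a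
    have hc := Multiset.le_iff_count.mp h a
    rw [Multiset.count_add] at hc
    rw [Multiset.count_sub, Multiset.count_inter]
    omega

lemma splitS {α : Type*} (g : α → M) (S : Multiset α) :
    ∀ (C : M), C ≤ (S.map g).sum →
    ∃ T : Multiset (α × M), T.map Prod.fst = S ∧ (T.map Prod.snd).sum = C ∧
      ∀ q ∈ T, q.2 ≤ g q.1 := by
  induction S using Multiset.induction_on with
  | empty =>
    intro C hC
    rw [Multiset.map_zero, Multiset.sum_zero, Multiset.le_zero] at hC
    exact ⟨0, by simp, by simp [hC], by simp⟩
  | cons a S ih =>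
    intro C hC
    rw [Multiset.map_cons, Multiset.sum_cons] at hC
    obtain ⟨C₁, C₂, rfl, h₁, h₂⟩ := split2 hC
    obtain ⟨T, hT1, hT2, hT3⟩ := ih C₂ h₂
    refine ⟨(a, C₁) ::ₘ T, by simp [hT1], by simp [hT2], ?_⟩
    rintro q hq
    rcases Multiset.mem_cons.mp hq with rfl | hq
    · exact h₁
    · exact hT3 q hq

lemma rep_of_le {X : M} {n : ℕ} {ψ : FormM} (h : X ≤ n • ({ψ} : M)) :
    X = (Multiset.card X) • ({ψ} : M) := by
  rw [Multiset.nsmul_singleton] at h ⊢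
  exact Multiset.eq_replicate_card.mpr
    (fun b hb => Multiset.eq_of_mem_replicate (Multiset.mem_of_le h hb))

lemma card_le_of_le_rep {X : M} {n : ℕ} {ψ : FormM} (h : X ≤ n • ({ψ} : M)) :
    Multiset.card X ≤ n := by
  have := Multiset.card_le_card h
  simpa using this

lemma le_msum_of_mem {X : Multiset M} {x : M} (hx : x ∈ X) : x ≤ X.sum := by
  obtain ⟨t, rfl⟩ := Multiset.exists_cons_of_mem hx
  rw [Multiset.sum_cons]
  exact le_add_right le_rfl

lemma sum_map_smul_const {α : Type*} (T : Multiset α) (f : α → ℕ) (G : M) :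
    (T.map (fun q => (f q) • G)).sum = ((T.map f).sum) • G := by
  induction T using Multiset.induction_on with
  | empty => simp
  | cons a T ih => simp [ih, add_nsmul]

lemma card_msum (X : Multiset M) :
    Multiset.card X.sum = (X.map Multiset.card).sum := by
  induction X using Multiset.induction_on with
  | empty => simp
  | cons a X ih => simp [ih]
/-- Size of a formula. -/
def sz : FormM → ℕ
  | .var _ => 1
  | .imp a b => sz a + sz b + 1
  | .box a => sz a + 1

lemma cancel_rec : ∀ (N : ℕ) (φ : FormM), sz φ ≤ N →
    ∀ {s : SeqM}, GKA s → ∀ Γ Δ : M, s = (Γ + {φ}, {φ} + Δ) → GKA (Γ, Δ) := by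
  intro N
  induction N with
  | zero =>
    intro φ hφ
    exact absurd hφ (by cases φ <;> simp [sz])
  | succ N ihN =>
    intro φ hφ s h
    have hsub : ∀ ψ, sz ψ < sz φ → ∀ Γ Δ : M,
        GKA (Γ + {ψ}, {ψ} + Δ) → GKA (Γ, Δ) := by
      intro ψ hψ Γ Δ hd
      exact ihN ψ (by omega) hd Γ Δ rfl
    clear hφ ihN
    induction h with
    | id Θ =>
      intro Γ Δ heq
      obtain ⟨h1, h2⟩ := Prod.mk.injEq .. ▸ heq
      have he : Γ + {φ} = Δ + {φ} := by rw [← h1, h2]; module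
      exact pcast (GKA.id Γ) rfl (add_right_cancel he)
    | @impL Γ' Δ' α β hpre ih =>
      intro Γ Δ heq
      obtain ⟨h1, h2⟩ := Prod.mk.injEq .. ▸ heq
      rcases exch h1 with ⟨he, hΓ⟩ | ⟨C, hΓ', hΓ⟩
      · -- principal: φ = α→β
        subst he
        have hinv := invR hpre (Γ' + {β}) ({α} + Δ) α β
          (seq_eq rfl (by rw [h2]; module))
        have c1 := hsub β (by simp [sz]) (Γ + {α}) ({α} + Δ)
          (pcast hinv (by rw [hΓ]; module) (by module))
        exact hsub α (by simp [sz]) Γ Δ c1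
      · have hih := ih (C + {β}) ({α} + Δ)
          (seq_eq (by rw [hΓ']; module) (by rw [h2]; module))
        exact pcast (GKA.impL (Γ := C) (Δ := Δ) (φ := α) (ψ := β) hih)
          (by rw [hΓ]) rfl
    | @impR Γ' Δ' α β hpre ih =>
      intro Γ Δ heq
      obtain ⟨h1, h2⟩ := Prod.mk.injEq .. ▸ heq
      have h2' : Δ' + {FormM.imp α β} = Δ + {φ} := by
        rw [show Δ' + {FormM.imp α β} = {FormM.imp α β} + Δ' by module, h2]; module
      rcases exch h2' with ⟨he, hΔ⟩ | ⟨C, hΔ', hΔ⟩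
      · subst he
        have hinv := invL hpre (Γ + {α}) ({β} + Δ') α β
          (seq_eq (by rw [h1]; module) rfl)
        have c1 := hsub α (by simp [sz]) (Γ + {β}) ({β} + Δ)
          (pcast hinv (by module) (by rw [hΔ]))
        exact hsub β (by simp [sz]) Γ Δ c1
      · have hih := ih (Γ + {α}) ({β} + C)
          (seq_eq (by rw [h1]; module) (by rw [hΔ']; module))
        exact pcast (GKA.impR (Γ := Γ) (Δ := C) (φ := α) (ψ := β) hih)
          rfl (by rw [hΔ]; module)
    | @boxS Γc Δc k hk Γ₀ S hsplit h0 hS ih0 ihS =>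
      clear ih0 ihS
      intro Γ Δ heq
      obtain ⟨h1, h2⟩ := Prod.mk.injEq .. ▸ heq
      by_cases hφΔc : φ ∈ Δc
      · -- context case
        obtain ⟨t, ht0⟩ := Multiset.exists_cons_of_mem hφΔc
        have ht : Δc = {φ} + t := by rw [Multiset.singleton_add]; exact ht0
        have hΓ : Γ = t + Γc.map FormM.box := by
          apply add_right_cancel (b := ({φ} : M))
          rw [← h1, ht]; module
        have hΔ : Δ = S.map (fun p => FormM.box p.2) + t := by
          apply add_left_cancel (a := ({φ} : M))
          rw [← h2, ht]; module
        exact pcast (GKA.boxS (Γ := Γc) (Δ := t) k hk Γ₀ S hsplit h0 hS)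
          (by rw [hΓ]) (by rw [hΔ])
      · -- principal case: φ = box ψ
        have hφbox : ∃ ψ, ψ ∈ Γc ∧ FormM.box ψ = φ := by
          have hm : φ ∈ Δc + Γc.map FormM.box := by rw [h1]; simp
          rcases Multiset.mem_add.mp hm with hmm | hmm
          · exact absurd hmm hφΔc
          · exact Multiset.mem_map.mp hmm
        obtain ⟨ψ, hψΓc, hφψ⟩ := hφbox
        subst hφψ
        have hszψ : sz ψ < sz (FormM.box ψ) := by simp [sz]
        have hcψ := hsub ψ hszψ
        have hp : ∃ p : M × FormM, p ∈ S ∧ p.2 = ψ := by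
          have hm : FormM.box ψ ∈ S.map (fun p => FormM.box p.2) + Δc := by
            rw [h2]; simp
          rcases Multiset.mem_add.mp hm with hmm | hmm
          · obtain ⟨p, hpS, hpe⟩ := Multiset.mem_map.mp hmm
            refine ⟨p, hpS, ?_⟩
            injection hpe
          · exact absurd hmm hφΔc
        obtain ⟨p, hpS, hp2⟩ := hp
        set Γc' := Γc.erase ψ with hΓc'def
        have hΓc : Γc = {ψ} + Γc' := by
          rw [Multiset.singleton_add, hΓc'def, Multiset.cons_erase hψΓc]
        have hΓ : Γ = Δc + Γc'.map FormM.box := by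
          apply add_right_cancel (b := ({FormM.box ψ} : M))
          rw [← h1, hΓc, Multiset.map_add, Multiset.map_singleton]; module
        set S' := S.erase p with hS'def
        have hSS : S = p ::ₘ S' := (Multiset.cons_erase hpS).symm
        have hΔ : Δ = S'.map (fun p => FormM.box p.2) + Δc := by
          apply add_left_cancel (a := ({FormM.box ψ} : M))
          rw [← h2, hSS, Multiset.map_cons, hp2, ← Multiset.singleton_add]; module
        have hsplit' : k • Γc' + k • ({ψ} : M)
            = Γ₀ + (p.1 + (S'.map Prod.fst).sum) := by
          rw [show k • Γc' + k • ({ψ} : M) = k • (({ψ} : M) + Γc') by module,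
            ← hΓc, hsplit, hSS, Multiset.map_cons, Multiset.sum_cons]
        have hle : k • ({ψ} : M) ≤ Γ₀ + (p.1 + (S'.map Prod.fst).sum) :=
          Multiset.le_iff_exists_add.mpr ⟨k • Γc', by rw [← hsplit']; module⟩
        obtain ⟨B₀, C', hkeq, hB₀le, hC'le⟩ := split2 hle
        obtain ⟨B₁, B₂, hC'eq, hB₁le, hB₂le⟩ := split2 hC'le
        obtain ⟨T, hT1, hT2, hT3⟩ := splitS Prod.fst S' B₂ hB₂le
        have hB₀k : B₀ ≤ k • ({ψ} : M) :=
          Multiset.le_iff_exists_add.mpr ⟨C', hkeq⟩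
        have hB₁k : B₁ ≤ k • ({ψ} : M) :=
          Multiset.le_iff_exists_add.mpr ⟨B₀ + B₂, by rw [hkeq, hC'eq]; module⟩
        have hB₂k : B₂ ≤ k • ({ψ} : M) :=
          Multiset.le_iff_exists_add.mpr ⟨B₀ + B₁, by rw [hkeq, hC'eq]; module⟩
        set m₀ := Multiset.card B₀ with hm₀def
        set m₁ := Multiset.card B₁ with hm₁def
        set m₂ := Multiset.card B₂ with hm₂def
        have hcard : m₀ + m₁ + m₂ = k := by
          have hcc : Multiset.card (k • ({ψ} : M)) = k := by simp
          rw [hkeq, hC'eq] at hcc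
          simp only [Multiset.card_add] at hcc
          omega
        have hm₁k : m₁ ≤ k := card_le_of_le_rep hB₁k
        set c := k - m₁ with hcdef
        obtain ⟨G, hG⟩ := Multiset.le_iff_exists_add.mp hB₁le
        have hDpre : GKA (G + m₁ • ({ψ} : M), m₁ • ({ψ} : M) + c • ({ψ} : M)) := by
          refine pcast (hS p hpS) ?_ ?_
          · rw [hG, rep_of_le hB₁k, ← hm₁def]; module
          · rw [hp2, show m₁ • ({ψ} : M) + c • ({ψ} : M) = (m₁ + c) • ({ψ} : M)
              by module, show m₁ + c = k by omega]
        have D : GKA (G, c • ({ψ} : M)) :=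
          cancelN hcψ m₁ G (c • ({ψ} : M)) hDpre
        obtain ⟨Γ₀', hΓ₀⟩ := Multiset.le_iff_exists_add.mp hB₀le
        have hSig : (S'.map Prod.fst).sum
            = B₂ + (T.map (fun q => q.1.1 - q.2)).sum := by
          rw [← hT1, Multiset.map_map]
          rw [show T.map (Prod.fst ∘ Prod.fst)
              = T.map (fun q => (q.1.1 - q.2) + q.2) from
            Multiset.map_congr rfl
              (fun q hq => (tsub_add_cancel_of_le (hT3 q hq)).symm)]
          rw [Multiset.sum_map_add, hT2]; module
        set R := (T.map (fun q => q.1.1 - q.2)).sum with hRdef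
        have key : k • Γc' = Γ₀' + G + R := by
          apply add_right_cancel (b := k • ({ψ} : M))
          rw [hsplit', hΓ₀, hG, hSig, hkeq, hC'eq]; module
        rcases Nat.eq_zero_or_pos c with hc0 | hcpos
        · -- c = 0
          have hm₁k' : m₁ = k := by omega
          have hm₀0 : m₀ = 0 := by omega
          have hm₂0 : m₂ = 0 := by omega
          have hB₀0 : B₀ = 0 := Multiset.card_eq_zero.mp hm₀0
          have hB₂0 : B₂ = 0 := Multiset.card_eq_zero.mp hm₂0
          have hT20 : ∀ q ∈ T, q.2 = (0 : M) := by
            intro q hq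
            have hle1 := le_msum_of_mem (Multiset.mem_map_of_mem Prod.snd hq)
            rw [hT2, hB₂0] at hle1
            exact Multiset.le_zero.mp hle1
          have hR' : R = (S'.map Prod.fst).sum := by
            rw [hRdef, show T.map (fun q => q.1.1 - q.2)
                = T.map (fun q => q.1.1) from Multiset.map_congr rfl
              (fun q hq => by rw [hT20 q hq, tsub_zero]), ← hT1, Multiset.map_map]
            rfl
          have hΓ₀' : Γ₀ = Γ₀' := by rw [hΓ₀, hB₀0, zero_add]
          have h0' : GKA (Γ₀ + G, (0 : M)) := by
            have hmix := mixN D 1 (s1 := (Γ₀, (0 : M))) h0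
            refine pcast hmix ?_ ?_
            · simp
            · simp [hc0]
          refine pcast (GKA.boxS (Γ := Γc') (Δ := Δc) k hk (Γ₀ + G) S' ?_ h0' ?_) ?_ ?_
          · rw [key, ← hR', hΓ₀']
          · intro q hq
            refine hS q (Multiset.mem_of_le (Multiset.erase_le p S) ?_)
            rw [← hS'def]; exact hq
          · rw [hΓ]
          · rw [hΔ]
        · -- c ≥ 1
          set K := c * k with hKdef
          have hK1 : 1 ≤ K :=
            Nat.one_le_iff_ne_zero.mpr (Nat.mul_ne_zero (by omega) (by omega))
          set Γ₀new := c • Γ₀' + m₀ • G with hΓ₀new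
          set Tf : ((M × FormM) × M) → (M × FormM) :=
            fun q => (c • (q.1.1 - q.2) + (Multiset.card q.2) • G, q.1.2) with hTf
          set Snew := T.map Tf with hSnew
          have hm₂sum : (T.map (fun q => Multiset.card q.2)).sum = m₂ := by
            rw [show T.map (fun q => Multiset.card q.2)
                = (T.map Prod.snd).map Multiset.card from by
              rw [Multiset.map_map]; rfl, ← card_msum, hT2]
          have hTsum : (Snew.map Prod.fst).sum = c • R + m₂ • G := by
            rw [hSnew, Multiset.map_map]
            rw [show (Prod.fst ∘ Tf)
                = fun q => c • (q.1.1 - q.2) + (Multiset.card q.2) • G from rfl]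
            rw [Multiset.sum_map_add]
            congr 1
            · rw [Multiset.sum_map_nsmul, hRdef]
            · rw [sum_map_smul_const, hm₂sum]
          have hcsum : m₀ + m₂ = c := by omega
          have splitnew : K • Γc' = Γ₀new + (Snew.map Prod.fst).sum := by
            rw [hTsum, hΓ₀new]
            calc K • Γc' = c • (k • Γc') := by rw [hKdef, mul_comm, mul_nsmul]
              _ = c • Γ₀' + c • G + c • R := by rw [key]; module
              _ = c • Γ₀' + (m₀ • G + m₂ • G) + c • R := by
                  rw [← add_nsmul, hcsum]
              _ = c • Γ₀' + m₀ • G + (c • R + m₂ • G) := by module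
          have h0new : GKA (Γ₀new, (0 : M)) := by
            have hs1 : GKA (c • Γ₀' + (c * m₀) • ({ψ} : M), (0 : M)) := by
              refine pcast (scale h0 c) ?_ (by simp)
              rw [hΓ₀, rep_of_le hB₀k, ← hm₀def]; module
            have hmix := mixN D m₀ hs1
            refine cancelN hcψ (c * m₀) Γ₀new 0 (pcast hmix ?_ ?_)
            · rw [hΓ₀new]; module
            · module
          have hSnewprem : ∀ p' ∈ Snew, GKA (p'.1, K • ({p'.2} : M)) := by
            intro p' hp'
            rw [hSnew, Multiset.mem_map] at hp'
            obtain ⟨q, hq, rfl⟩ := hp'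
            have hqS : q.1 ∈ S := Multiset.mem_of_le (Multiset.erase_le p S)
              (by rw [← hS'def, ← hT1]; exact Multiset.mem_map_of_mem Prod.fst hq)
            have hbase := hS q.1 hqS
            have hq2rep : q.2 = (Multiset.card q.2) • ({ψ} : M) :=
              rep_of_le (le_trans (le_trans
                (le_msum_of_mem (Multiset.mem_map_of_mem Prod.snd hq))
                (le_of_eq hT2)) hB₂k)
            obtain ⟨Gq, hGq⟩ := Multiset.le_iff_exists_add.mp (hT3 q hq)
            have htsub : q.1.1 - q.2 = Gq := by rw [hGq, add_tsub_cancel_left]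
            have hmix := mixN D (Multiset.card q.2) (scale hbase c)
            refine pcast (cancelN hcψ (c * Multiset.card q.2) (Tf q).1
              (c • (k • ({q.1.2} : M))) (pcast hmix ?_ ?_)) rfl ?_
            · rw [hTf]
              simp only
              rw [htsub]
              have e : q.1.1 = Multiset.card q.2 • ({ψ} : M) + Gq := by
                rw [hGq, ← hq2rep]
              rw [e]; module
            · module
            · rw [hTf]
              simp only
              rw [hKdef, mul_comm, mul_nsmul]
          have hSmapsnd : Snew.map (fun p => FormM.box p.2)
              = S'.map (fun p => FormM.box p.2) := by
            rw [hSnew, Multiset.map_map, ← hT1, Multiset.map_map]; rfl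
          refine pcast (GKA.boxS (Γ := Γc') (Δ := Δc) K hK1 Γ₀new Snew
            splitnew h0new hSnewprem) (by rw [hΓ]) ?_
          rw [hSmapsnd, ← hΔ]

theorem cancel_single (φ : FormM) (Γ Δ : M)
    (h : GKA (Γ + {φ}, {φ} + Δ)) : GKA (Γ, Δ) :=
  cancel_rec (sz φ) φ le_rfl h Γ Δ rfl

end Cancel11

/-- The cancellation rule is GK(A_m)^r-admissible: if
Γ, φ ⇒ φ, Δ is GK(A_m)^r-derivable, then Γ ⇒ Δ is GK(A_m)^r-derivable. -/
theorem stmt_11 (φ : FormM) (Γ Δ : Multiset FormM)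
    (h : GKAmR (Γ + {φ}, {φ} + Δ)) : GKAmR (Γ, Δ) :=
  Cancel11.gkamr_of_gka
    (Cancel11.cancel_single φ Γ Δ (Cancel11.gka_of_gkamr h))
end
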